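/- arXiv:cond-mat/0204055 — 3 statements merged into one kernel-verified Lean document; each statement's English description precedes it below -/
import Mathlib

section
/- Let G = (V, E) be a finite graph with edge weights w : E → ℝ and f(A) = c(A) + Σ_{e∈A} w(e). The maximum of f over all subsets A ⊆ E equals the maximum, over all Potts partitions P of V (partitions each of whose classes induces a connected subgraph of G), of the number of classes of P plus the total weight of the edges of E having both endpoints in a single class of P. (Here w is assumed nonnegative.) -/
open scoped Classical

noncomputable section

variable {V : Type*} [Fintype V] [DecidableEq V]

/-- The number of connected components of the spanning subgraph `(V, A)`. -/
def compCount (A : Finset (Sym2 V)) : ℕ :=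
  Nat.card (SimpleGraph.fromEdgeSet (↑A : Set (Sym2 V))).ConnectedComponent

/-- `f(A) = c(A) + Σ_{e ∈ A} w(e)`. -/
def pottsFun (w : Sym2 V → ℝ) (A : Finset (Sym2 V)) : ℝ :=
  (compCount A : ℝ) + ∑ e ∈ A, w e

/-- A family of vertex classes is a Potts partition (of its underlying vertex set)
for `G` when every class induces a connected subgraph of `G`. -/
def IsPotts (G : SimpleGraph V) (Q : Finset (Finset V)) : Prop :=
  ∀ X ∈ Q, (G.induce (↑X : Set V)).Connected

/-- The value of a partition: its number of classes plus the total weight of the edges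
of `G` having both endpoints in a single class. -/
def partitionValue (G : SimpleGraph V) [DecidableRel G.Adj] (w : Sym2 V → ℝ)
    (Q : Finset (Finset V)) : ℝ :=
  (Q.card : ℝ) +
    ∑ e ∈ G.edgeFinset.filter (fun e => ∃ X ∈ Q, ∀ v ∈ e, v ∈ X), w e

/-- If a finpartition of `univ` has parts that are exactly the "reachability classes" of a
graph `H`, then the number of connected components of `H` equals the number of parts. -/
private lemma card_comp_of_parts (H : SimpleGraph V)
    (P : Finpartition (Finset.univ : Finset V))
    (h : ∀ u v : V, H.Reachable u v ↔ ∃ X ∈ P.parts, u ∈ X ∧ v ∈ X) :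
    Nat.card H.ConnectedComponent = P.parts.card := by
  have hpart : ∀ u v : V, H.Reachable u v → P.part u = P.part v := by
    intro u v huv
    obtain ⟨X, hX, hu, hv⟩ := (h u v).1 huv
    rw [P.part_eq_of_mem hX hu, P.part_eq_of_mem hX hv]
  let f : H.ConnectedComponent → {X // X ∈ P.parts} :=
    SimpleGraph.ConnectedComponent.lift
      (fun v => ⟨P.part v, P.part_mem.2 (Finset.mem_univ v)⟩)
      (fun u v p _ => Subtype.ext (hpart u v ⟨p⟩))
  have hbij : Function.Bijective f := by
    constructor
    · intro C D
      refine SimpleGraph.ConnectedComponent.ind₂ (fun u v hEq => ?_) C D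
      have huv : P.part u = P.part v := congrArg Subtype.val hEq
      refine SimpleGraph.ConnectedComponent.sound ?_
      exact (h u v).2 ⟨P.part u, P.part_mem.2 (Finset.mem_univ u),
        P.mem_part (Finset.mem_univ u), huv ▸ P.mem_part (Finset.mem_univ v)⟩
    · rintro ⟨X, hX⟩
      obtain ⟨v, hv⟩ := P.nonempty_of_mem_parts hX
      exact ⟨H.connectedComponentMk v, Subtype.ext (P.part_eq_of_mem hX hv)⟩
  rw [Nat.card_eq_of_bijective f hbij, Nat.card_eq_finsetCard]

omit [DecidableEq V] in
private lemma fromEdgeSet_le_of_subset (G : SimpleGraph V) [DecidableRel G.Adj]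
    {A : Finset (Sym2 V)} (hA : A ⊆ G.edgeFinset) :
    SimpleGraph.fromEdgeSet (↑A : Set (Sym2 V)) ≤ G := by
  intro u v huv
  rw [SimpleGraph.fromEdgeSet_adj] at huv
  exact (SimpleGraph.mem_edgeSet G).1 (SimpleGraph.mem_edgeFinset.1 (hA huv.1))

/-- The reachability classes of `fromEdgeSet ↑A` form a Potts partition of `G`
whenever `A ⊆ E(G)`. -/
private lemma potts_of_components (G : SimpleGraph V) [DecidableRel G.Adj]
    {A : Finset (Sym2 V)} (hA : A ⊆ G.edgeFinset) :
    IsPotts G (Finpartition.ofSetoid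
      (SimpleGraph.fromEdgeSet (↑A : Set (Sym2 V))).reachableSetoid).parts := by
  set H : SimpleGraph V := SimpleGraph.fromEdgeSet (↑A : Set (Sym2 V)) with hH
  set P : Finpartition (Finset.univ : Finset V) :=
    Finpartition.ofSetoid H.reachableSetoid with hP
  intro X hX
  obtain ⟨a, ha⟩ := P.nonempty_of_mem_parts hX
  have hXpart : X = P.part a := (P.part_eq_of_mem hX ha).symm
  have hmem : ∀ b, b ∈ X ↔ H.Reachable a b := by
    intro b
    rw [hXpart]
    exact Finpartition.mem_part_ofSetoid_iff_rel
  have haX : (a : V) ∈ (↑X : Set V) := by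
    exact (hmem a).2 (SimpleGraph.Reachable.refl a)
  have hconn : (H.induce (↑X : Set V)).Connected := by
    apply H.induce_connected_of_patches a haX
    intro v hv
    obtain ⟨p⟩ := (hmem v).1 hv
    refine ⟨{x | x ∈ p.support}, ?_, p.start_mem_support, p.end_mem_support, ?_⟩
    · intro x hx
      exact (hmem x).2 ⟨p.takeUntil x hx⟩
    · exact (p.connected_induce_support).preconnected _ _
  have hle : H.induce (↑X : Set V) ≤ G.induce (↑X : Set V) := by
    intro x y hxy
    exact fromEdgeSet_le_of_subset G hA hxy
  exact SimpleGraph.Connected.mono hle hconn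

private lemma reach_iff_components (H : SimpleGraph V) (u v : V) :
    H.Reachable u v ↔
      ∃ X ∈ (Finpartition.ofSetoid H.reachableSetoid).parts, u ∈ X ∧ v ∈ X := by
  set P : Finpartition (Finset.univ : Finset V) :=
    Finpartition.ofSetoid H.reachableSetoid with hP
  constructor
  · intro huv
    refine ⟨P.part u, P.part_mem.2 (Finset.mem_univ u), P.mem_part (Finset.mem_univ u), ?_⟩
    exact Finpartition.mem_part_ofSetoid_iff_rel.2 huv
  · rintro ⟨X, hX, hu, hv⟩
    have : X = P.part u := (P.part_eq_of_mem hX hu).symm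
    subst this
    exact Finpartition.mem_part_ofSetoid_iff_rel.1 hv

/-- Direction 1: for every `A ⊆ E(G)` there is a Potts partition whose value is at least
`pottsFun w A`. -/
private lemma exists_partition_ge (G : SimpleGraph V) [DecidableRel G.Adj]
    (w : Sym2 V → ℝ) (hw : ∀ e, 0 ≤ w e)
    {A : Finset (Sym2 V)} (hA : A ⊆ G.edgeFinset) :
    ∃ P : Finpartition (Finset.univ : Finset V),
      IsPotts G P.parts ∧ pottsFun w A ≤ partitionValue G w P.parts := by
  set H : SimpleGraph V := SimpleGraph.fromEdgeSet (↑A : Set (Sym2 V)) with hH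
  set P : Finpartition (Finset.univ : Finset V) :=
    Finpartition.ofSetoid H.reachableSetoid with hP
  refine ⟨P, potts_of_components G hA, ?_⟩
  have hcard : compCount A = P.parts.card :=
    card_comp_of_parts H P (reach_iff_components H)
  have hsub : A ⊆ G.edgeFinset.filter (fun e => ∃ X ∈ P.parts, ∀ v ∈ e, v ∈ X) := by
    intro e he
    rw [Finset.mem_filter]
    refine ⟨hA he, ?_⟩
    induction e with
    | _ u v =>
      have hne : u ≠ v := by
        intro huv
        exact G.not_isDiag_of_mem_edgeSet (SimpleGraph.mem_edgeFinset.1 (hA he))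
          (Sym2.mk_isDiag_iff.2 huv)
      have hadj : H.Adj u v := by
        rw [hH, SimpleGraph.fromEdgeSet_adj]
        exact ⟨he, hne⟩
      refine ⟨P.part u, P.part_mem.2 (Finset.mem_univ u), ?_⟩
      intro x hx
      rw [Sym2.mem_iff] at hx
      rcases hx with rfl | rfl
      · exact P.mem_part (Finset.mem_univ x)
      · exact Finpartition.mem_part_ofSetoid_iff_rel.2 hadj.reachable
  unfold pottsFun partitionValue
  rw [hcard]
  exact add_le_add le_rfl
    (Finset.sum_le_sum_of_subset_of_nonneg hsub (fun e _ _ => hw e))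

/-- Direction 2: every Potts partition's value is attained by some `A ⊆ E(G)`. -/
private lemma partition_value_attained (G : SimpleGraph V) [DecidableRel G.Adj]
    (w : Sym2 V → ℝ) (Q : Finpartition (Finset.univ : Finset V))
    (hQ : IsPotts G Q.parts) :
    ∃ A ⊆ G.edgeFinset, partitionValue G w Q.parts = pottsFun w A := by
  set A : Finset (Sym2 V) :=
    G.edgeFinset.filter (fun e => ∃ X ∈ Q.parts, ∀ v ∈ e, v ∈ X) with hAdef
  set H : SimpleGraph V := SimpleGraph.fromEdgeSet (↑A : Set (Sym2 V)) with hH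
  have hA : A ⊆ G.edgeFinset := Finset.filter_subset _ _
  have hstep : ∀ a b : V, H.Adj a b → Q.part a = Q.part b := by
    intro a b hab
    rw [hH, SimpleGraph.fromEdgeSet_adj] at hab
    have hab' := hab.1
    rw [hAdef, Finset.mem_coe, Finset.mem_filter] at hab'
    obtain ⟨-, X, hX, hall⟩ := hab'
    rw [Q.part_eq_of_mem hX (hall a (Sym2.mem_mk_left a b)),
      Q.part_eq_of_mem hX (hall b (Sym2.mem_mk_right a b))]
  have hiff : ∀ u v : V, H.Reachable u v ↔ ∃ X ∈ Q.parts, u ∈ X ∧ v ∈ X := by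
    intro u v
    constructor
    · intro huv
      obtain ⟨p⟩ := huv
      have hp : Q.part u = Q.part v := by
        induction p with
        | nil => rfl
        | cons h p ih => exact (hstep _ _ h).trans ih
      exact ⟨Q.part u, Q.part_mem.2 (Finset.mem_univ u),
        Q.mem_part (Finset.mem_univ u), hp ▸ Q.mem_part (Finset.mem_univ v)⟩
    · rintro ⟨X, hX, hu, hv⟩
      have hreach : (G.induce (↑X : Set V)).Reachable ⟨u, hu⟩ ⟨v, hv⟩ :=
        (hQ X hX).preconnected _ _
      have hmap : ∀ {a b : (↑X : Set V)}, (G.induce (↑X : Set V)).Adj a b →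
          H.Adj a.val b.val := by
        rintro ⟨x, hx⟩ ⟨y, hy⟩ hxy
        rw [hH, SimpleGraph.fromEdgeSet_adj]
        refine ⟨?_, fun h => hxy.ne (Subtype.ext h)⟩
        rw [hAdef, Finset.mem_coe, Finset.mem_filter]
        refine ⟨SimpleGraph.mem_edgeFinset.2 ((SimpleGraph.mem_edgeSet G).2 hxy), X, hX, ?_⟩
        intro z hz
        rw [Sym2.mem_iff] at hz
        rcases hz with rfl | rfl
        · exact hx
        · exact hy
      exact hreach.map ⟨fun x => x.val, hmap⟩
  have hcard : compCount A = Q.parts.card := card_comp_of_parts H Q hiff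
  refine ⟨A, hA, ?_⟩
  unfold pottsFun partitionValue
  rw [hcard]

/-- The maximum of `f(A) = c(A) + Σ_{e ∈ A} w(e)` over all subsets `A ⊆ E` equals the
maximum, over all Potts partitions `P` of `V` (partitions each of whose classes induces
a connected subgraph of `G`), of the number of classes of `P` plus the total weight of
the edges of `E` having both endpoints in a single class of `P`. -/
theorem max_pottsFun_eq_max_partitionValue (G : SimpleGraph V) [DecidableRel G.Adj]
    (w : Sym2 V → ℝ) (hw : ∀ e, 0 ≤ w e) :
    ∃ M : ℝ,
      IsGreatest {x : ℝ | ∃ A ⊆ G.edgeFinset, x = pottsFun w A} M ∧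
      IsGreatest {x : ℝ | ∃ P : Finpartition (Finset.univ : Finset V),
        IsPotts G P.parts ∧ x = partitionValue G w P.parts} M := by
  set S : Finset ℝ := G.edgeFinset.powerset.image (pottsFun w) with hS
  have hSne : S.Nonempty :=
    ⟨pottsFun w ∅, Finset.mem_image.2 ⟨∅, Finset.mem_powerset.2 (Finset.empty_subset _), rfl⟩⟩
  set M : ℝ := S.max' hSne with hM
  have hmemS : ∀ {A : Finset (Sym2 V)}, A ⊆ G.edgeFinset → pottsFun w A ∈ S := by
    intro A hA
    exact Finset.mem_image.2 ⟨A, Finset.mem_powerset.2 hA, rfl⟩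
  have hub1 : ∀ x ∈ {x : ℝ | ∃ A ⊆ G.edgeFinset, x = pottsFun w A}, x ≤ M := by
    rintro x ⟨A, hA, rfl⟩
    exact S.le_max' _ (hmemS hA)
  have hub2 : ∀ x ∈ {x : ℝ | ∃ P : Finpartition (Finset.univ : Finset V),
      IsPotts G P.parts ∧ x = partitionValue G w P.parts}, x ≤ M := by
    rintro x ⟨P, hP, rfl⟩
    obtain ⟨A, hA, hEq⟩ := partition_value_attained G w P hP
    rw [hEq]
    exact S.le_max' _ (hmemS hA)
  obtain ⟨A₀, hA₀, hA₀eq⟩ : ∃ A₀ ∈ G.edgeFinset.powerset, pottsFun w A₀ = M :=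
    Finset.mem_image.1 (S.max'_mem hSne)
  rw [Finset.mem_powerset] at hA₀
  refine ⟨M, ⟨⟨A₀, hA₀, hA₀eq.symm⟩, hub1⟩, ⟨?_, hub2⟩⟩
  obtain ⟨P, hP, hle⟩ := exists_partition_ge G w hw hA₀
  refine ⟨P, hP, ?_⟩
  have h1 : partitionValue G w P.parts ≤ M := hub2 _ ⟨P, hP, rfl⟩
  have h2 : M ≤ partitionValue G w P.parts := hA₀eq ▸ hle
  linarith
end
end

section
/- Extension lemma: let G = (V, E) be a finite graph with edge weights w : E → ℝ, let x ∈ V, and let G' = G − x be the subgraph obtained by deleting x (edges keep their weights). If F' ⊆ E(G') maximizes f_{G'}(A) = c_{G'}(A) + Σ_{e∈A} w(e) over subsets A of E(G'), then there exists F ⊆ E maximizing f_G over subsets of E such that F' ⊆ F. -/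
open scoped Classical

noncomputable section

variable {V : Type*} [Fintype V] [DecidableEq V]

/-- The number of connected components of the spanning subgraph on the vertex set `S`
determined by the edge set `A` (isolated vertices count as components). -/
def compCountOn (S : Set V) (A : Finset (Sym2 V)) : ℕ :=
  Nat.card ((SimpleGraph.fromEdgeSet (↑A : Set (Sym2 V))).induce S).ConnectedComponent

/-- `f_{G-x}(A) = c_{G-x}(A) + Σ_{e ∈ A} w(e)` for a spanning subgraph of `G - x`,
whose vertex set is `V \ {x}`. -/
def pottsFunOn (S : Set V) (w : Sym2 V → ℝ) (A : Finset (Sym2 V)) : ℝ :=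
  (compCountOn S A : ℝ) + ∑ e ∈ A, w e

set_option linter.unusedSectionVars false

open SimpleGraph

lemma gr_mono {A B : Finset (Sym2 V)} (h : A ⊆ B) :
    SimpleGraph.fromEdgeSet (↑A : Set (Sym2 V)) ≤ SimpleGraph.fromEdgeSet (↑B : Set (Sym2 V)) :=
  SimpleGraph.fromEdgeSet_mono (by exact_mod_cast h)

lemma compCount_anti {A B : Finset (Sym2 V)} (h : A ⊆ B) : compCount B ≤ compCount A := by
  apply Nat.card_le_card_of_surjective (ConnectedComponent.map (Hom.ofLE (gr_mono h)))
  intro C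
  exact C.ind fun v => ⟨(SimpleGraph.fromEdgeSet (↑A : Set (Sym2 V))).connectedComponentMk v, rfl⟩

lemma reach_insert_decomp {A : Finset (Sym2 V)} {u v a b : V}
    (h : (fromEdgeSet (↑(insert s(u,v) A) : Set (Sym2 V))).Reachable a b) :
    (fromEdgeSet (↑A : Set (Sym2 V))).Reachable a b ∨
      ((fromEdgeSet (↑A : Set (Sym2 V))).Reachable a u ∧
        (fromEdgeSet (↑A : Set (Sym2 V))).Reachable v b) ∨
      ((fromEdgeSet (↑A : Set (Sym2 V))).Reachable a v ∧
        (fromEdgeSet (↑A : Set (Sym2 V))).Reachable u b) := by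
  set GA := fromEdgeSet (↑A : Set (Sym2 V)) with hGA
  obtain ⟨p⟩ := h
  induction p with
  | nil => exact Or.inl (Reachable.refl _)
  | @cons a c b hadj p ih =>
    rw [fromEdgeSet_adj, Finset.coe_insert, Set.mem_insert_iff] at hadj
    obtain ⟨he | he, hne⟩ := hadj
    · rw [Sym2.eq_iff] at he
      rcases he with ⟨rfl, rfl⟩ | ⟨rfl, rfl⟩
      · rcases ih with h1 | ⟨h1, h2⟩ | ⟨h1, h2⟩
        · exact Or.inr (Or.inl ⟨Reachable.refl _, h1⟩)
        · exact Or.inr (Or.inl ⟨Reachable.refl _, h2⟩)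
        · exact Or.inl h2
      · rcases ih with h1 | ⟨h1, h2⟩ | ⟨h1, h2⟩
        · exact Or.inr (Or.inr ⟨Reachable.refl _, h1⟩)
        · exact Or.inl h2
        · exact Or.inr (Or.inr ⟨Reachable.refl _, h2⟩)
    · have hac : GA.Reachable a c := Adj.reachable (by rw [hGA, fromEdgeSet_adj]; exact ⟨he, hne⟩)
      rcases ih with h1 | ⟨h1, h2⟩ | ⟨h1, h2⟩
      · exact Or.inl (hac.trans h1)
      · exact Or.inr (Or.inl ⟨hac.trans h1, h2⟩)
      · exact Or.inr (Or.inr ⟨hac.trans h1, h2⟩)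

/-- Inserting an edge within one component keeps the component count. -/
lemma compCount_insert_eq {A : Finset (Sym2 V)} {u v : V}
    (huv : (fromEdgeSet (↑A : Set (Sym2 V))).Reachable u v) :
    compCount (insert s(u,v) A) = compCount A := by
  have hsub : A ⊆ insert s(u,v) A := Finset.subset_insert _ _
  refine le_antisymm (compCount_anti hsub) ?_
  apply Nat.card_le_card_of_injective (ConnectedComponent.map (Hom.ofLE (gr_mono hsub)))
  intro C D
  refine C.ind fun a => D.ind fun b => ?_
  intro h
  simp only [ConnectedComponent.map_mk, Hom.coe_ofLE, id_eq, ConnectedComponent.eq] at h ⊢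
  rcases reach_insert_decomp h with h1 | ⟨h1, h2⟩ | ⟨h1, h2⟩
  · exact h1
  · exact (h1.trans huv).trans h2
  · exact (h1.trans huv.symm).trans h2

/-- Inserting an edge between two distinct components drops the count by exactly 1. -/
lemma compCount_insert_of_not_reach {A : Finset (Sym2 V)} {u v : V} (hne : u ≠ v)
    (huv : ¬ (fromEdgeSet (↑A : Set (Sym2 V))).Reachable u v) :
    compCount A = compCount (insert s(u,v) A) + 1 := by
  set GA := fromEdgeSet (↑A : Set (Sym2 V)) with hGA
  set GB := fromEdgeSet (↑(insert s(u,v) A) : Set (Sym2 V)) with hGB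
  have hsub : A ⊆ insert s(u,v) A := Finset.subset_insert _ _
  set φ : GA.ConnectedComponent → GB.ConnectedComponent :=
    ConnectedComponent.map (Hom.ofLE (gr_mono hsub)) with hφ
  have hsurj : Function.Surjective φ := fun C => C.ind fun w => ⟨GA.connectedComponentMk w, rfl⟩
  have hadj : GB.Adj u v := by
    rw [hGB, fromEdgeSet_adj]; exact ⟨by simp, hne⟩
  have hlt : compCount (insert s(u,v) A) < compCount A := by
    have hinj : ¬ Function.Injective φ := by
      intro hinj
      apply huv
      have : φ (GA.connectedComponentMk u) = φ (GA.connectedComponentMk v) := by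
        simp only [hφ, ConnectedComponent.map_mk, Hom.coe_ofLE, id_eq]
        exact ConnectedComponent.eq.2 hadj.reachable
      exact ConnectedComponent.eq.1 (hinj this)
    have h1 : Nat.card GB.ConnectedComponent ≤ Nat.card GA.ConnectedComponent :=
      Nat.card_le_card_of_surjective φ hsurj
    rcases h1.lt_or_eq with h | h
    · exact h
    · exact absurd (Function.Surjective.bijective_of_nat_card_le hsurj h.ge).injective hinj
  have hle : compCount A ≤ compCount (insert s(u,v) A) + 1 := by
    set U := GA.connectedComponentMk u with hU
    have hinj2 : Function.Injective (fun C : {C : GA.ConnectedComponent // C ≠ U} => φ C.1) := by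
      rintro ⟨C, hC⟩ ⟨D, hD⟩ h
      refine Subtype.ext ?_
      induction C using ConnectedComponent.ind with | _ a =>
      induction D using ConnectedComponent.ind with | _ b =>
      simp only [hφ, ConnectedComponent.map_mk, Hom.coe_ofLE, id_eq,
        ConnectedComponent.eq] at h ⊢
      rcases reach_insert_decomp h with h1 | ⟨h1, h2⟩ | ⟨h1, h2⟩
      · exact h1
      · exact absurd (ConnectedComponent.eq.2 h1) hC
      · exact absurd (ConnectedComponent.eq.2 h2.symm) hD
    have h2 : Nat.card {C : GA.ConnectedComponent // C ≠ U} ≤ compCount (insert s(u,v) A) :=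
      Nat.card_le_card_of_injective _ hinj2
    have h3 : compCount A = Nat.card {C : GA.ConnectedComponent // C ≠ U} + 1 := by
      have := Nat.card_congr (Equiv.sumCompl (fun C : GA.ConnectedComponent => C = U)).symm
      rw [Nat.card_sum] at this
      have hone : Nat.card {C : GA.ConnectedComponent // C = U} = 1 := by
        rw [Nat.card_eq_one_iff_unique]
        exact ⟨⟨fun a b => Subtype.ext (a.2.trans b.2.symm)⟩, ⟨⟨U, rfl⟩⟩⟩
      rw [hone] at this
      simpa [compCount, add_comm] using this
    omega
  omega

lemma compCount_insert_diag (A : Finset (Sym2 V)) (u : V) :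
    compCount (insert s(u,u) A) = compCount A := by
  have : (fromEdgeSet (↑(insert s(u,u) A) : Set (Sym2 V))) = fromEdgeSet (↑A : Set (Sym2 V)) := by
    ext a b
    simp only [fromEdgeSet_adj, Finset.coe_insert, Set.mem_insert_iff, Sym2.eq_iff]
    constructor
    · rintro ⟨h | h, hne⟩
      · rcases h with ⟨rfl, rfl⟩ | ⟨rfl, rfl⟩ <;> exact absurd rfl hne
      · exact ⟨h, hne⟩
    · rintro ⟨h, hne⟩; exact ⟨Or.inr h, hne⟩
  rw [compCount, this, compCount]

lemma compCount_step {A A' : Finset (Sym2 V)} (h : A ⊆ A') (e : Sym2 V) :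
    compCount A' + compCount (insert e A) ≤ compCount A + compCount (insert e A') := by
  induction e with
  | _ u v =>
    by_cases hd : u = v
    · subst hd; rw [compCount_insert_diag, compCount_insert_diag]; omega
    by_cases hr : (fromEdgeSet (↑A' : Set (Sym2 V))).Reachable u v
    · rw [compCount_insert_eq hr]
      have := compCount_anti (Finset.subset_insert s(u,v) A)
      omega
    · have hrA : ¬ (fromEdgeSet (↑A : Set (Sym2 V))).Reachable u v :=
        fun hx => hr (hx.mono (gr_mono h))
      rw [compCount_insert_of_not_reach hd hrA, compCount_insert_of_not_reach hd hr]
      omega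

lemma compCount_diff (D : Finset (Sym2 V)) :
    ∀ A A' : Finset (Sym2 V), A ⊆ A' →
      compCount A' + compCount (A ∪ D) ≤ compCount A + compCount (A' ∪ D) := by
  induction D using Finset.induction_on with
  | empty => intro A A' h; simp only [Finset.union_empty]; omega
  | @insert e D he ih =>
    intro A A' h
    have h1 := ih A A' h
    have h2 := compCount_step (Finset.union_subset_union h (Finset.Subset.refl D)) e
    rw [Finset.union_insert, Finset.union_insert]
    omega

lemma compCount_supermodular (A B : Finset (Sym2 V)) :
    compCount A + compCount B ≤ compCount (A ∩ B) + compCount (A ∪ B) := by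
  have := compCount_diff B (A ∩ B) A Finset.inter_subset_left
  rwa [Finset.union_eq_right.2 Finset.inter_subset_right] at this

lemma compCount_eq_compCountOn (x : V) (A : Finset (Sym2 V)) (hA : ∀ e ∈ A, x ∉ e) :
    compCount A = compCountOn {v : V | v ≠ x} A + 1 := by
  set G := fromEdgeSet (↑A : Set (Sym2 V)) with hG
  set S : Set V := {v : V | v ≠ x} with hS
  have hiso : ∀ y, ¬ G.Adj x y := by
    intro y hy
    rw [hG, fromEdgeSet_adj] at hy
    exact hA _ hy.1 (Sym2.mem_mk_left x y)
  have hreach_x : ∀ b, G.Reachable x b → b = x := by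
    intro b hb
    obtain ⟨p⟩ := hb
    cases p with
    | nil => rfl
    | cons h _ => exact absurd h (hiso _)
  have hlift : ∀ (a b : V) (p : G.Walk a b) (ha : a ≠ x) (hb : b ≠ x),
      (G.induce S).Reachable ⟨a, ha⟩ ⟨b, hb⟩ := by
    intro a b p
    induction p with
    | nil => intro ha hb; exact Reachable.refl _
    | @cons a c b hadj p ih =>
      intro ha hb
      have hc : c ≠ x := by
        rintro rfl
        exact hiso a hadj.symm
      have step : (G.induce S).Adj ⟨a, ha⟩ ⟨c, hc⟩ := hadj
      exact (step.reachable).trans (ih hc hb)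
  set ι : G.induce S →g G := (SimpleGraph.Embedding.induce S).toHom with hι
  set fn : (G.induce S).ConnectedComponent ⊕ Unit → G.ConnectedComponent :=
    fun z => Sum.elim (ConnectedComponent.map ι) (fun _ => G.connectedComponentMk x) z with hfn
  have hbij : Function.Bijective fn := by
    constructor
    · rintro (C | u) (D | t) h
      · refine congrArg Sum.inl ?_
        induction C using ConnectedComponent.ind with | _ a =>
        induction D using ConnectedComponent.ind with | _ b =>
        obtain ⟨a, ha⟩ := a
        obtain ⟨b, hb⟩ := b
        simp only [hfn, Sum.elim_inl, ConnectedComponent.map_mk, ConnectedComponent.eq] at h ⊢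
        obtain ⟨p⟩ := h
        exact hlift a b p ha hb
      · exfalso
        induction C using ConnectedComponent.ind with | _ a =>
        obtain ⟨a, ha⟩ := a
        simp only [hfn, Sum.elim_inl, Sum.elim_inr, ConnectedComponent.map_mk,
          ConnectedComponent.eq] at h
        exact ha (hreach_x a h.symm)
      · exfalso
        induction D using ConnectedComponent.ind with | _ a =>
        obtain ⟨a, ha⟩ := a
        simp only [hfn, Sum.elim_inl, Sum.elim_inr, ConnectedComponent.map_mk,
          ConnectedComponent.eq] at h
        exact ha (hreach_x a h)
      · cases u; cases t; rfl
    · intro C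
      induction C using ConnectedComponent.ind with | _ v =>
      by_cases hv : v = x
      · subst hv; exact ⟨Sum.inr (), rfl⟩
      · exact ⟨Sum.inl ((G.induce S).connectedComponentMk ⟨v, hv⟩), rfl⟩
  have := Nat.card_eq_of_bijective fn hbij
  rw [Nat.card_sum] at this
  simpa [compCount, compCountOn] using this.symm

/-- Extension lemma: let `G = (V, E)` be a finite graph with edge weights `w`, `x ∈ V`,
and `G' = G - x` the graph obtained by deleting `x` (its edges are the edges of `G` not
containing `x`, with the same weights). If `F' ⊆ E(G')` maximizes
`f_{G'}(A) = c_{G'}(A) + Σ_{e ∈ A} w(e)` over subsets of `E(G')`, then there exists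
`F ⊆ E` maximizing `f_G` over subsets of `E` with `F' ⊆ F`. -/
theorem exists_optimal_extension (G : SimpleGraph V) [DecidableRel G.Adj]
    (w : Sym2 V → ℝ) (x : V)
    (F' : Finset (Sym2 V)) (hF' : F' ⊆ G.edgeFinset.filter (fun e => x ∉ e))
    (hopt : ∀ A ⊆ G.edgeFinset.filter (fun e => x ∉ e),
      pottsFunOn {v : V | v ≠ x} w A ≤ pottsFunOn {v : V | v ≠ x} w F') :
    ∃ F ⊆ G.edgeFinset, F' ⊆ F ∧ ∀ A ⊆ G.edgeFinset, pottsFun w A ≤ pottsFun w F := by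
  obtain ⟨F₀, hF₀mem, hF₀max⟩ := Finset.exists_max_image G.edgeFinset.powerset (pottsFun w)
    ⟨∅, Finset.mem_powerset.2 (Finset.empty_subset _)⟩
  rw [Finset.mem_powerset] at hF₀mem
  have hF'E : F' ⊆ G.edgeFinset := hF'.trans (Finset.filter_subset _ _)
  refine ⟨F₀ ∪ F', Finset.union_subset hF₀mem hF'E, Finset.subset_union_right, ?_⟩
  intro A hA
  refine (hF₀max A (Finset.mem_powerset.2 hA)).trans ?_
  have hsup := compCount_supermodular F₀ F'
  have hsum : (∑ e ∈ F₀ ∪ F', w e) + ∑ e ∈ F₀ ∩ F', w e = (∑ e ∈ F₀, w e) + ∑ e ∈ F', w e :=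
    Finset.sum_union_inter
  have hnx : ∀ e ∈ F', x ∉ e := fun e he => by
    simpa using (Finset.mem_filter.1 (hF' he)).2
  have hnx2 : ∀ e ∈ F₀ ∩ F', x ∉ e := fun e he => hnx e (Finset.mem_inter.1 he).2
  have h1 := compCount_eq_compCountOn x F' hnx
  have h2 := compCount_eq_compCountOn x (F₀ ∩ F') hnx2
  have h3 := hopt (F₀ ∩ F') ((Finset.inter_subset_right).trans hF')
  simp only [pottsFun, pottsFunOn] at h3 ⊢
  have hsupR : (compCount F₀ : ℝ) + compCount F' ≤ compCount (F₀ ∩ F') + compCount (F₀ ∪ F') := by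
    exact_mod_cast hsup
  have h1R : (compCount F' : ℝ) = compCountOn {v : V | v ≠ x} F' + 1 := by exact_mod_cast h1
  have h2R : (compCount (F₀ ∩ F') : ℝ) = compCountOn {v : V | v ≠ x} (F₀ ∩ F') + 1 := by
    exact_mod_cast h2
  linarith
end
end

section
/- Main extension theorem: let G = (V, E) be a finite graph with edge weights w : E → ℝ, 0 ≤ w(e) for all e, let x ∈ V, and let F' be a set of edges of G − x maximizing f_{G−x}. Let P_G(F') be the partition of V whose classes are the vertex sets of the connected components of (V∖{x}, F') together with the singleton {x}. Then for any 𝒲 ⊆ P_G(F') containing {x} that minimizes |𝒲| − 1 − w(E(𝒲)) over all subsets of P_G(F') containing {x}, the edge set F* = F' ∪ E(𝒲) maximizes f_G over all subsets of E. -/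
open scoped Classical

set_option linter.unusedSectionVars false
set_option linter.unreachableTactic false
set_option linter.unusedTactic false
set_option maxHeartbeats 1600000

noncomputable section

variable {V : Type*} [Fintype V] [DecidableEq V]

/-- `E(𝒲)`: the set of edges of `G` joining vertices belonging to two different members
of the collection `𝒲` of vertex sets. -/
def crossEdges (G : SimpleGraph V) [DecidableRel G.Adj] (𝒲 : Finset (Finset V)) :
    Finset (Sym2 V) :=
  G.edgeFinset.filter
    (fun e => ∃ X ∈ 𝒲, ∃ Y ∈ 𝒲, X ≠ Y ∧ ∃ i j, e = s(i, j) ∧ i ∈ X ∧ j ∈ Y)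

/-- The partition of `V` into the vertex sets of the connected components of the
spanning graph `(V, A)`.  When the edges of `A` avoid `x`, this is exactly
`P_G(A)`: the components of `(V \ {x}, A)` together with the singleton `{x}`. -/
def compPartition (A : Finset (Sym2 V)) : Finset (Finset V) :=
  Finset.univ.image fun v : V =>
    Finset.univ.filter fun u =>
      (SimpleGraph.fromEdgeSet (↑A : Set (Sym2 V))).Reachable u v


namespace PottsAux

open SimpleGraph Finset

lemma reach_closed {H H' : SimpleGraph V} {P : V → Prop}
    (h : ∀ a b, H.Adj a b → P a → P b ∧ H'.Adj a b) :
    ∀ {u v}, H.Reachable u v → P u → P v ∧ H'.Reachable u v := by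
  intro u v huv hu
  obtain ⟨p⟩ := huv
  induction p with
  | nil => exact ⟨hu, Reachable.refl _⟩
  | @cons a b c hadj p ih =>
    obtain ⟨hb, hadj'⟩ := h _ _ hadj hu
    obtain ⟨hv, hr⟩ := ih hb
    exact ⟨hv, hadj'.reachable.trans hr⟩

lemma reach_of_adj_reach {H H' : SimpleGraph V}
    (h : ∀ a b, H.Adj a b → H'.Reachable a b) :
    ∀ {u v}, H.Reachable u v → H'.Reachable u v := by
  intro u v huv
  obtain ⟨p⟩ := huv
  induction p with
  | nil => exact Reachable.refl _
  | @cons a b c hadj p ih => exact (h _ _ hadj).trans ih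

/-- the class of `v` in the partition determined by `X`. -/
def cls (X : Finset (Sym2 V)) (v : V) : Finset V :=
  Finset.univ.filter fun u =>
    (SimpleGraph.fromEdgeSet (↑X : Set (Sym2 V))).Reachable u v

lemma compPartition_eq (X : Finset (Sym2 V)) :
    compPartition X = Finset.univ.image (cls X) := rfl

@[simp] lemma mem_cls {X : Finset (Sym2 V)} {u v : V} :
    u ∈ cls X v ↔ (SimpleGraph.fromEdgeSet (↑X : Set (Sym2 V))).Reachable u v := by
  simp [cls]

lemma self_mem_cls {X : Finset (Sym2 V)} {v : V} : v ∈ cls X v := by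
  simp only [mem_cls]
  exact SimpleGraph.Reachable.refl _

lemma cls_eq_of_reach {X : Finset (Sym2 V)} {u v : V}
    (h : (SimpleGraph.fromEdgeSet (↑X : Set (Sym2 V))).Reachable u v) :
    cls X u = cls X v := by
  ext z; simp only [mem_cls]
  exact ⟨fun hz => hz.trans h, fun hz => hz.trans h.symm⟩

lemma reach_of_cls_eq {X : Finset (Sym2 V)} {u v : V}
    (h : cls X u = cls X v) :
    (SimpleGraph.fromEdgeSet (↑X : Set (Sym2 V))).Reachable u v := by
  have : u ∈ cls X v := h ▸ self_mem_cls
  exact mem_cls.mp this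

lemma cls_eq_of_mem {X : Finset (Sym2 V)} {u v : V} (h : u ∈ cls X v) :
    cls X u = cls X v := cls_eq_of_reach (mem_cls.mp h)

lemma cls_mono {X Y : Finset (Sym2 V)} (h : X ⊆ Y) {v : V} : cls X v ⊆ cls Y v := by
  intro u hu
  exact mem_cls.mpr ((mem_cls.mp hu).mono (SimpleGraph.fromEdgeSet_mono (by exact_mod_cast h)))

/-- K1 : the number of connected components equals the number of classes. -/
lemma compCount_eq_card (X : Finset (Sym2 V)) :
    compCount X = (compPartition X).card := by
  classical
  set H := SimpleGraph.fromEdgeSet (↑X : Set (Sym2 V)) with hH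
  have hwd : ∀ (v w : V) (p : H.Walk v w), p.IsPath → cls X v = cls X w := by
    intro v w p _
    exact cls_eq_of_reach ⟨p⟩
  let g : H.ConnectedComponent → Finset V := ConnectedComponent.lift (cls X) hwd
  have hginj : Function.Injective g := by
    intro c d
    refine ConnectedComponent.ind₂ (fun v w h => ?_) c d
    exact ConnectedComponent.sound (reach_of_cls_eq h)
  have h1 : compCount X = Fintype.card H.ConnectedComponent := by
    rw [compCount, Nat.card_eq_fintype_card]
  have h2 : (Finset.univ : Finset H.ConnectedComponent) =
      Finset.univ.image H.connectedComponentMk := by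
    ext c
    simp only [Finset.mem_univ, Finset.mem_image, true_iff]
    exact c.exists_rep.imp fun v hv => ⟨trivial, hv⟩
  have h3 : compPartition X = (Finset.univ : Finset H.ConnectedComponent).image g := by
    rw [h2, Finset.image_image, compPartition_eq]
    rfl
  rw [h3, Finset.card_image_of_injective _ hginj, h1, Fintype.card]


lemma not_adj_isolated {X : Finset (Sym2 V)} {x : V} (hX : ∀ e ∈ X, x ∉ e) (u : V) :
    ¬ (fromEdgeSet (↑X : Set (Sym2 V))).Adj x u := by
  intro h
  rw [fromEdgeSet_adj] at h
  exact hX _ (by exact_mod_cast h.1) (Sym2.mem_mk_left x u)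

lemma eq_of_reach_isolated {X : Finset (Sym2 V)} {x u : V} (hX : ∀ e ∈ X, x ∉ e)
    (h : (fromEdgeSet (↑X : Set (Sym2 V))).Reachable x u) : u = x := by
  obtain ⟨p⟩ := h
  cases p with
  | nil => rfl
  | cons hadj _ => exact absurd hadj (not_adj_isolated hX _)

lemma reach_induce_of_ne {X : Finset (Sym2 V)} {x : V} (hX : ∀ e ∈ X, x ∉ e) {v w : V}
    (h : (fromEdgeSet (↑X : Set (Sym2 V))).Reachable v w) (hv : v ≠ x) :
    ∃ hw : w ≠ x,
      (((fromEdgeSet (↑X : Set (Sym2 V))).induce {y : V | y ≠ x}).Reachable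
        ⟨v, hv⟩ ⟨w, hw⟩) := by
  obtain ⟨p⟩ := h
  induction p with
  | nil => exact ⟨hv, Reachable.refl _⟩
  | @cons a b c hadj p ih =>
    have ha : a ≠ x := hv
    have hb : b ≠ x := by
      rintro rfl
      exact not_adj_isolated hX _ hadj.symm
    obtain ⟨hc, hr⟩ := ih hb
    refine ⟨hc, Reachable.trans ?_ hr⟩
    exact SimpleGraph.Adj.reachable (by simpa using hadj)

lemma reach_of_reach_induce {X : Finset (Sym2 V)} {S : Set V} {u v : ↥S}
    (h : ((fromEdgeSet (↑X : Set (Sym2 V))).induce S).Reachable u v) :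
    (fromEdgeSet (↑X : Set (Sym2 V))).Reachable ↑u ↑v := by
  obtain ⟨p⟩ := h
  induction p with
  | nil => exact Reachable.refl _
  | @cons a b c hadj p ih =>
    exact Reachable.trans (SimpleGraph.Adj.reachable (by simpa using hadj)) ih

/-- L0 -/
lemma compCount_eq_on_add_one {x : V} {X : Finset (Sym2 V)} (hX : ∀ e ∈ X, x ∉ e) :
    compCount X = compCountOn {v : V | v ≠ x} X + 1 := by
  set H := fromEdgeSet (↑X : Set (Sym2 V)) with hH
  set Hind := H.induce {y : V | y ≠ x} with hHind
  have hwd : ∀ (v w : V) (p : H.Walk v w), p.IsPath →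
      (fun v => if h : v = x then (Sum.inr () : Hind.ConnectedComponent ⊕ Unit)
        else Sum.inl (Hind.connectedComponentMk ⟨v, h⟩)) v =
      (fun v => if h : v = x then (Sum.inr () : Hind.ConnectedComponent ⊕ Unit)
        else Sum.inl (Hind.connectedComponentMk ⟨v, h⟩)) w := by
    intro v w p _
    by_cases hv : v = x
    · subst hv
      have : w = v := eq_of_reach_isolated hX ⟨p⟩
      subst this; rfl
    · obtain ⟨hw, hr⟩ := reach_induce_of_ne hX ⟨p⟩ hv
      simp only [dif_neg hv, dif_neg hw]
      exact congrArg _ (ConnectedComponent.sound hr)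
  let φ : H.ConnectedComponent → Hind.ConnectedComponent ⊕ Unit :=
    ConnectedComponent.lift _ hwd
  have hsurj : Function.Surjective φ := by
    rintro (c | u)
    · refine ConnectedComponent.ind (fun v => ?_) c
      refine ⟨H.connectedComponentMk ↑v, ?_⟩
      show (if h : (v : V) = x then _ else Sum.inl (Hind.connectedComponentMk ⟨↑v, h⟩)) = _
      rw [dif_neg v.2]
    · exact ⟨H.connectedComponentMk x, by show (if h : x = x then _ else _) = _; rw [dif_pos rfl]⟩
  have hinj : Function.Injective φ := by
    intro c d
    refine ConnectedComponent.ind₂ (fun v w h => ?_) c d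
    replace h : (if hv : v = x then (Sum.inr () : Hind.ConnectedComponent ⊕ Unit)
        else Sum.inl (Hind.connectedComponentMk ⟨v, hv⟩)) =
        (if hw : w = x then (Sum.inr () : Hind.ConnectedComponent ⊕ Unit)
        else Sum.inl (Hind.connectedComponentMk ⟨w, hw⟩)) := h
    by_cases hv : v = x <;> by_cases hw : w = x
    · subst hv; subst hw; rfl
    · rw [dif_pos hv, dif_neg hw] at h; exact absurd h (by simp)
    · rw [dif_neg hv, dif_pos hw] at h; exact absurd h (by simp)
    · rw [dif_neg hv, dif_neg hw] at h
      have := Sum.inl.inj h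
      have hr := reach_of_reach_induce (ConnectedComponent.exact this)
      exact ConnectedComponent.sound hr
  have : compCount X = Nat.card (Hind.ConnectedComponent ⊕ Unit) :=
    Nat.card_eq_of_bijective φ ⟨hinj, hsurj⟩
  have hu : Nat.card Unit = 1 := Nat.card_unique
  rw [this, Nat.card_sum, hu]
  rfl


lemma reach_mono {X Y : Finset (Sym2 V)} (h : X ⊆ Y) {u v : V}
    (hr : (SimpleGraph.fromEdgeSet (↑X : Set (Sym2 V))).Reachable u v) :
    (SimpleGraph.fromEdgeSet (↑Y : Set (Sym2 V))).Reachable u v :=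
  hr.mono (SimpleGraph.fromEdgeSet_mono (by exact_mod_cast h))

lemma cls_mem_compPartition (X : Finset (Sym2 V)) (v : V) :
    cls X v ∈ compPartition X := by
  rw [compPartition_eq]
  exact mem_image_of_mem _ (mem_univ v)

lemma eq_of_mem_classes {X : Finset (Sym2 V)} {c d : Finset V} {a : V}
    (hc : c ∈ compPartition X) (hd : d ∈ compPartition X)
    (hac : a ∈ c) (had : a ∈ d) : c = d := by
  rw [compPartition_eq] at hc hd
  obtain ⟨v, -, rfl⟩ := mem_image.mp hc
  obtain ⟨u, -, rfl⟩ := mem_image.mp hd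
  rw [← cls_eq_of_mem hac, ← cls_eq_of_mem had]

/-- K3: the key component-count identity.  `U` is the component of `x` in `M`;
`N` consists of `F` together with all edges of `M` avoiding `U`. -/
lemma compCount_split (F M : Finset (Sym2 V)) (hFM : F ⊆ M) (x : V) :
    compCount (F ∪ (M \ F).filter (fun e => ∀ v ∈ e, v ∉ cls M x)) + 1
      = ((compPartition F).filter (· ⊆ cls M x)).card + compCount M := by
  set U : Finset V := cls M x with hU
  set N : Finset (Sym2 V) := F ∪ (M \ F).filter (fun e => ∀ v ∈ e, v ∉ U) with hN
  have hNM : N ⊆ M := by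
    rw [hN]
    exact union_subset hFM (Subset.trans (filter_subset _ _) (sdiff_subset))
  -- U is closed under M-adjacency
  have hUclosed : ∀ a b : V, (fromEdgeSet (↑M : Set (Sym2 V))).Adj a b → a ∈ U → b ∈ U := by
    intro a b hadj ha
    rw [hU, mem_cls] at ha ⊢
    exact hadj.symm.reachable.trans ha
  -- pointwise class identities
  have hin : ∀ v ∈ U, cls N v = cls F v := by
    intro v hv
    apply Subset.antisymm
    · intro u hu
      have hr := (mem_cls.mp hu).symm  -- reach v u in N
      have key := reach_closed (H := fromEdgeSet (↑N : Set (Sym2 V)))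
        (H' := fromEdgeSet (↑F : Set (Sym2 V))) (P := fun z => z ∈ U)
        (fun a b hadj ha => by
          have hab : s(a, b) ∈ N := by
            rw [fromEdgeSet_adj] at hadj; exact_mod_cast hadj.1
          have hne : a ≠ b := ((fromEdgeSet_adj _).mp hadj).2
          rw [hN, mem_union] at hab
          rcases hab with hab | hab
          · refine ⟨?_, (fromEdgeSet_adj _).mpr ⟨by exact_mod_cast hab, hne⟩⟩
            have : (fromEdgeSet (↑M : Set (Sym2 V))).Adj a b :=
              (fromEdgeSet_adj _).mpr ⟨by exact_mod_cast hFM hab, hne⟩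
            exact hUclosed a b this ha
          · exact absurd ha ((mem_filter.mp hab).2 a (Sym2.mem_mk_left a b)))
        hr hv
      exact mem_cls.mpr key.2.symm
    · exact cls_mono (by rw [hN]; exact subset_union_left)
  have hout : ∀ v : V, v ∉ U → cls N v = cls M v := by
    intro v hv
    apply Subset.antisymm
    · exact cls_mono hNM
    · intro u hu
      have hr := (mem_cls.mp hu).symm  -- reach v u in M
      have key := reach_closed (H := fromEdgeSet (↑M : Set (Sym2 V)))
        (H' := fromEdgeSet (↑N : Set (Sym2 V))) (P := fun z => z ∉ U)
        (fun a b hadj ha => by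
          have hab : s(a, b) ∈ M := by
            rw [fromEdgeSet_adj] at hadj; exact_mod_cast hadj.1
          have hne : a ≠ b := ((fromEdgeSet_adj _).mp hadj).2
          have hb : b ∉ U := fun hbU => ha (hUclosed b a hadj.symm hbU)
          refine ⟨hb, (fromEdgeSet_adj _).mpr ⟨?_, hne⟩⟩
          by_cases hF : s(a, b) ∈ F
          · exact_mod_cast (by rw [hN]; exact mem_union_left _ hF : s(a,b) ∈ N)
          · have : s(a, b) ∈ (M \ F).filter (fun e => ∀ v ∈ e, v ∉ U) := by
              refine mem_filter.mpr ⟨mem_sdiff.mpr ⟨hab, hF⟩, ?_⟩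
              intro z hz
              rcases Sym2.mem_iff.mp hz with rfl | rfl
              · exact ha
              · exact hb
            exact_mod_cast (by rw [hN]; exact mem_union_right _ this : s(a,b) ∈ N))
        hr hv
      exact mem_cls.mpr key.2.symm
  -- partition decomposition
  have himg : compPartition N = U.image (cls F) ∪ Uᶜ.image (cls M) := by
    rw [compPartition_eq]
    have : (Finset.univ : Finset V) = U ∪ Uᶜ := by rw [union_compl]
    rw [this, image_union]
    congr 1
    · exact image_congr (fun v hv => hin v hv)
    · exact image_congr (fun v hv => hout v (mem_compl.mp hv))
  have hUx : x ∈ U := by rw [hU]; exact self_mem_cls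
  have hclsU : ∀ v ∈ U, cls F v ⊆ U := by
    intro v hv u hu
    have h1 : (fromEdgeSet (↑M : Set (Sym2 V))).Reachable u v :=
      reach_mono hFM (mem_cls.mp hu)
    rw [hU, mem_cls] at hv ⊢
    exact h1.trans hv
  have h1 : U.image (cls F) = (compPartition F).filter (· ⊆ U) := by
    ext c
    simp only [mem_image, mem_filter]
    constructor
    · rintro ⟨v, hv, rfl⟩
      exact ⟨cls_mem_compPartition F v, hclsU v hv⟩
    · rintro ⟨hc, hcU⟩
      rw [compPartition_eq] at hc
      obtain ⟨v, -, rfl⟩ := mem_image.mp hc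
      exact ⟨v, hcU self_mem_cls, rfl⟩
  have h2 : Uᶜ.image (cls M) = (compPartition M).erase U := by
    ext c
    simp only [mem_image, mem_erase, mem_compl]
    constructor
    · rintro ⟨v, hv, rfl⟩
      refine ⟨fun hc => hv ?_, cls_mem_compPartition M v⟩
      rw [hU] at hc
      have : x ∈ cls M v := hc ▸ self_mem_cls
      rw [hU, mem_cls]
      exact (mem_cls.mp this).symm
    · rintro ⟨hcU, hc⟩
      rw [compPartition_eq] at hc
      obtain ⟨v, -, rfl⟩ := mem_image.mp hc
      refine ⟨v, fun hvU => hcU ?_, rfl⟩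
      rw [hU] at hvU ⊢
      exact (cls_eq_of_mem (by rwa [mem_cls] at hvU ⊢ <;> exact hvU : v ∈ cls M x)).symm ▸ rfl
  have hdisj : Disjoint (U.image (cls F)) (Uᶜ.image (cls M)) := by
    rw [Finset.disjoint_left]
    rintro c hc1 hc2
    obtain ⟨v, hv, rfl⟩ := mem_image.mp hc1
    obtain ⟨u, hu, hc⟩ := mem_image.mp hc2
    have hvU : v ∈ cls F v := self_mem_cls
    have : v ∈ cls M u := hc ▸ hvU
    have hvu : (fromEdgeSet (↑M : Set (Sym2 V))).Reachable v u := mem_cls.mp this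
    have : u ∈ U := by
      rw [hU, mem_cls]
      have hvx : (fromEdgeSet (↑M : Set (Sym2 V))).Reachable v x := by
        have := hclsU v hv hvU  -- v ∈ U
        · rwa [hU, mem_cls] at this
      exact hvu.symm.trans hvx
    exact (mem_compl.mp hu) this
  have hUmem : U ∈ compPartition M := by rw [hU]; exact cls_mem_compPartition M x
  rw [compCount_eq_card N, compCount_eq_card M, himg, card_union_of_disjoint hdisj, h1, h2]
  have : ((compPartition M).erase U).card + 1 = (compPartition M).card :=
    card_erase_add_one hUmem
  omega

/-- Step (iv): a lower bound for the component count of `F ∪ K`. -/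
lemma compCount_union_cross_ge {F K : Finset (Sym2 V)} {𝒲 : Finset (Finset V)} {x : V}
    (h𝒲 : 𝒲 ⊆ compPartition F) (hx𝒲 : ({x} : Finset V) ∈ 𝒲)
    (hxcls : cls F x = {x})
    (hK : ∀ a b : V, s(a, b) ∈ K → ∃ Z ∈ 𝒲, a ∈ Z) :
    compCount F + 1 ≤ compCount (F ∪ K) + 𝒲.card := by
  set N : Finset (Sym2 V) := F ∪ K with hN
  -- classes not in 𝒲 are still classes of N
  have hfix : ∀ v : V, cls F v ∉ 𝒲 → cls N v = cls F v := by
    intro v hv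
    apply Subset.antisymm
    · intro u hu
      have hr := (mem_cls.mp hu).symm
      have key := reach_closed (H := fromEdgeSet (↑N : Set (Sym2 V)))
        (H' := fromEdgeSet (↑F : Set (Sym2 V))) (P := fun z => z ∈ cls F v)
        (fun a b hadj ha => by
          have hab : s(a, b) ∈ N := by
            rw [fromEdgeSet_adj] at hadj; exact_mod_cast hadj.1
          have hne : a ≠ b := ((fromEdgeSet_adj _).mp hadj).2
          rw [hN, mem_union] at hab
          rcases hab with hab | hab
          · refine ⟨?_, (fromEdgeSet_adj _).mpr ⟨by exact_mod_cast hab, hne⟩⟩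
            have hba : (fromEdgeSet (↑F : Set (Sym2 V))).Reachable b a :=
              ((fromEdgeSet_adj _).mpr ⟨by exact_mod_cast hab, hne⟩).symm.reachable
            exact mem_cls.mpr (hba.trans (mem_cls.mp ha))
          · obtain ⟨Z, hZ𝒲, haZ⟩ := hK a b hab
            have : cls F v = Z :=
              eq_of_mem_classes (cls_mem_compPartition F v) (h𝒲 hZ𝒲) ha haZ
            exact absurd (this ▸ hZ𝒲) hv)
        hr self_mem_cls
      exact mem_cls.mpr key.2.symm
    · exact cls_mono (by rw [hN]; exact subset_union_left)
  -- counting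
  have hsub : insert (cls N x) ((compPartition F) \ 𝒲) ⊆ compPartition N := by
    intro c hc
    rcases mem_insert.mp hc with rfl | hc
    · exact cls_mem_compPartition N x
    · obtain ⟨hcF, hc𝒲⟩ := mem_sdiff.mp hc
      rw [compPartition_eq] at hcF
      obtain ⟨v, -, rfl⟩ := mem_image.mp hcF
      rw [← hfix v hc𝒲]
      exact cls_mem_compPartition N v
  have hxnot : cls N x ∉ (compPartition F) \ 𝒲 := by
    intro hc
    obtain ⟨hcF, hc𝒲⟩ := mem_sdiff.mp hc
    have hx : x ∈ cls N x := self_mem_cls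
    have : cls N x = cls F x := by
      rw [compPartition_eq] at hcF
      obtain ⟨v, -, hv⟩ := mem_image.mp hcF
      have hxv : x ∈ cls F v := hv ▸ hx
      rw [← hv, cls_eq_of_mem hxv]
    rw [this, hxcls] at hc𝒲
    exact hc𝒲 hx𝒲
  have hcard1 : ((compPartition F) \ 𝒲).card + 1 ≤ (compPartition N).card := by
    have := card_le_card hsub
    rwa [card_insert_of_notMem hxnot] at this
  have hcard2 : ((compPartition F) \ 𝒲).card + 𝒲.card = (compPartition F).card :=
    card_sdiff_add_card_eq_card h𝒲
  rw [compCount_eq_card, compCount_eq_card]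
  omega


lemma cls_adj_closed {M : Finset (Sym2 V)} {x a b : V}
    (hadj : (fromEdgeSet (↑M : Set (Sym2 V))).Adj a b) (ha : a ∈ cls M x) :
    b ∈ cls M x := by
  rw [mem_cls] at ha ⊢
  exact hadj.symm.reachable.trans ha

lemma cls_subset_clsM {X M : Finset (Sym2 V)} (hXM : X ⊆ M) {x v : V}
    (hv : v ∈ cls M x) : cls X v ⊆ cls M x := by
  intro u hu
  rw [mem_cls] at hv ⊢
  exact (reach_mono hXM (mem_cls.mp hu)).trans hv

/-- walk surgery: a vertex reaching `x` reaches a neighbour of `x` avoiding `x`-edges. -/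
lemma walk_surgery {Z : Finset (Sym2 V)} {x v : V}
    (h : (fromEdgeSet (↑Z : Set (Sym2 V))).Reachable v x) (hv : v ≠ x) :
    ∃ y, y ≠ x ∧ s(y, x) ∈ Z ∧
      (fromEdgeSet (↑(Z.filter (fun e => x ∉ e)) : Set (Sym2 V))).Reachable v y := by
  rw [reachable_iff_reflTransGen] at h
  induction h using Relation.ReflTransGen.head_induction_on with
  | refl => exact absurd rfl hv
  | @head a b hadj hrest ih =>
    by_cases hb : b = x
    · subst hb
      refine ⟨a, hv, ?_, Reachable.refl _⟩
      have := (fromEdgeSet_adj _).mp hadj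
      exact_mod_cast this.1
    · obtain ⟨y, hy, hyx, hr⟩ := ih hb
      refine ⟨y, hy, hyx, Reachable.trans (SimpleGraph.Adj.reachable ?_) hr⟩
      have hadj' := (fromEdgeSet_adj _).mp hadj
      refine (fromEdgeSet_adj _).mpr ⟨?_, hadj'.2⟩
      have h1 : s(a, b) ∈ Z := by exact_mod_cast hadj'.1
      have hxe : x ∉ s(a, b) := by
        rw [Sym2.mem_iff]
        rintro (rfl | rfl)
        · exact hv rfl
        · exact hb rfl
      exact_mod_cast Finset.mem_filter.mpr ⟨h1, hxe⟩

lemma cls_union_out {M F Eo : Finset (Sym2 V)} (hFM : F ⊆ M) {x : V}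
    (ho : ∀ e ∈ Eo, ∀ v ∈ e, v ∉ cls M x) {v : V} (hv : v ∈ cls M x) :
    cls (F ∪ Eo) v = cls F v := by
  apply Finset.Subset.antisymm
  · intro u hu
    have hr := (mem_cls.mp hu).symm
    have key := reach_closed (H := fromEdgeSet (↑(F ∪ Eo) : Set (Sym2 V)))
      (H' := fromEdgeSet (↑F : Set (Sym2 V))) (P := fun z => z ∈ cls M x)
      (fun a b hadj ha => by
        have hne : a ≠ b := ((fromEdgeSet_adj _).mp hadj).2
        have hab : s(a, b) ∈ F ∪ Eo := by
          have := ((fromEdgeSet_adj _).mp hadj).1; exact_mod_cast this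
        rcases Finset.mem_union.mp hab with hab | hab
        · refine ⟨?_, (fromEdgeSet_adj _).mpr ⟨by exact_mod_cast hab, hne⟩⟩
          exact cls_adj_closed ((fromEdgeSet_adj _).mpr ⟨by exact_mod_cast hFM hab, hne⟩) ha
        · exact absurd ha (ho _ hab a (Sym2.mem_mk_left a b)))
      hr hv
    exact mem_cls.mpr key.2.symm
  · exact cls_mono Finset.subset_union_left

lemma cls_union_in {M F Ei : Finset (Sym2 V)} (hFM : F ⊆ M) {x : V}
    (hi : ∀ e ∈ Ei, ∀ u ∈ e, u ∈ cls M x) {v : V} (hv : v ∉ cls M x) :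
    cls (F ∪ Ei) v = cls F v := by
  apply Finset.Subset.antisymm
  · intro u hu
    have hr := (mem_cls.mp hu).symm
    have key := reach_closed (H := fromEdgeSet (↑(F ∪ Ei) : Set (Sym2 V)))
      (H' := fromEdgeSet (↑F : Set (Sym2 V))) (P := fun z => z ∉ cls M x)
      (fun a b hadj ha => by
        have hne : a ≠ b := ((fromEdgeSet_adj _).mp hadj).2
        have hab : s(a, b) ∈ F ∪ Ei := by
          have := ((fromEdgeSet_adj _).mp hadj).1; exact_mod_cast this
        rcases Finset.mem_union.mp hab with hab | hab
        · refine ⟨?_, (fromEdgeSet_adj _).mpr ⟨by exact_mod_cast hab, hne⟩⟩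
          intro hb
          exact ha (cls_adj_closed
            ((fromEdgeSet_adj _).mpr ⟨by exact_mod_cast hFM hab, hne⟩).symm hb)
        · exact absurd (hi _ hab a (Sym2.mem_mk_left a b)) ha)
      hr hv
    exact mem_cls.mpr key.2.symm
  · exact cls_mono Finset.subset_union_left

/-- splitting the component count along the component of `x` in `M`. -/
lemma compCount_card_split {M X : Finset (Sym2 V)} (hXM : X ⊆ M) (x : V) :
    compCount X = ((cls M x).image (cls X)).card + ((cls M x)ᶜ.image (cls X)).card := by
  rw [compCount_eq_card, compPartition_eq]
  have huniv : (Finset.univ : Finset V) = cls M x ∪ (cls M x)ᶜ := by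
    rw [Finset.union_compl]
  rw [huniv, Finset.image_union]
  apply Finset.card_union_of_disjoint
  rw [Finset.disjoint_left]
  rintro c hc1 hc2
  obtain ⟨v, hv, rfl⟩ := Finset.mem_image.mp hc1
  obtain ⟨u, hu, hc⟩ := Finset.mem_image.mp hc2
  have h1 : v ∈ cls X u := hc ▸ self_mem_cls
  have h2 : v ∈ cls M x := hv
  have : u ∈ cls M x := by
    rw [mem_cls] at h2 ⊢
    exact (reach_mono hXM (mem_cls.mp h1)).symm.trans h2
  exact (Finset.mem_compl.mp hu) this

/-- "independence": merging inside and outside of `U` are independent. -/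
lemma compCount_ind {M F Eo Ei : Finset (Sym2 V)} (hFM : F ⊆ M)
    (hEoM : Eo ⊆ M) (hEiM : Ei ⊆ M) (x : V)
    (ho : ∀ e ∈ Eo, ∀ v ∈ e, v ∉ cls M x)
    (hi : ∀ e ∈ Ei, ∀ u ∈ e, u ∈ cls M x) :
    compCount (F ∪ Eo) + compCount (F ∪ Ei)
      = compCount F + compCount (F ∪ Eo ∪ Ei) := by
  have hFEo : F ∪ Eo ⊆ M := Finset.union_subset hFM hEoM
  have hFEi : F ∪ Ei ⊆ M := Finset.union_subset hFM hEiM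
  have hFEoEi : F ∪ Eo ∪ Ei ⊆ M := Finset.union_subset hFEo hEiM
  rw [compCount_card_split hFM x, compCount_card_split hFEo x,
    compCount_card_split hFEi x, compCount_card_split hFEoEi x]
  have e1 : (cls M x).image (cls (F ∪ Eo)) = (cls M x).image (cls F) :=
    Finset.image_congr (fun v hv => cls_union_out hFM ho hv)
  have e2 : (cls M x)ᶜ.image (cls (F ∪ Ei)) = (cls M x)ᶜ.image (cls F) :=
    Finset.image_congr (fun v hv => cls_union_in hFM hi (Finset.mem_compl.mp hv))
  have e3 : (cls M x).image (cls (F ∪ Eo ∪ Ei)) = (cls M x).image (cls (F ∪ Ei)) := by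
    refine Finset.image_congr (fun v hv => ?_)
    have : F ∪ Eo ∪ Ei = (F ∪ Ei) ∪ Eo := by
      rw [Finset.union_right_comm]
    rw [this]
    exact cls_union_out hFEi ho hv
  have e4 : (cls M x)ᶜ.image (cls (F ∪ Eo ∪ Ei)) = (cls M x)ᶜ.image (cls (F ∪ Eo)) := by
    refine Finset.image_congr (fun v hv => ?_)
    exact cls_union_in hFEo hi (Finset.mem_compl.mp hv)
  rw [e1, e2, e3, e4]
  omega

/-- local supermodularity. -/
lemma compCount_ls {A F' : Finset (Sym2 V)} (x : V) (hF'x : ∀ e ∈ F', x ∉ e) :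
    compCount A + compCount (A.filter (fun e => x ∉ e) ∪ F')
      ≤ compCount (A ∪ F') + compCount (A.filter (fun e => x ∉ e)) := by
  set A₀ := A.filter (fun e => x ∉ e) with hA₀
  set B := A₀ ∪ F' with hB
  set M := A ∪ F' with hM
  -- K3 instance for (A₀, A)
  have hk1 : compCount A₀ + 1
      = ((compPartition A₀).filter (· ⊆ cls A x)).card + compCount A := by
    have h0 : (A \ A₀).filter (fun e => ∀ v ∈ e, v ∉ cls A x) = ∅ := by
      rw [Finset.filter_eq_empty_iff]
      intro e he hctr
      obtain ⟨heA, heA₀⟩ := Finset.mem_sdiff.mp he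
      have hx : x ∈ e := by
        by_contra hx
        exact heA₀ (Finset.mem_filter.mpr ⟨heA, hx⟩)
      exact hctr x hx self_mem_cls
    have := compCount_split A₀ A (Finset.filter_subset _ _) x
    rwa [h0, Finset.union_empty] at this
  -- K3 instance for (B, M)
  have hBM : B ⊆ M := by
    rw [hB, hM]
    exact Finset.union_subset
      ((Finset.filter_subset _ _).trans Finset.subset_union_left)
      Finset.subset_union_right
  have hk2 : compCount B + 1
      = ((compPartition B).filter (· ⊆ cls M x)).card + compCount M := by
    have h0 : (M \ B).filter (fun e => ∀ v ∈ e, v ∉ cls M x) = ∅ := by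
      rw [Finset.filter_eq_empty_iff]
      intro e he hctr
      obtain ⟨heM, heB⟩ := Finset.mem_sdiff.mp he
      have heA : e ∈ A := by
        rcases Finset.mem_union.mp heM with h | h
        · exact h
        · exact absurd (Finset.mem_union_right _ h) heB
      have hx : x ∈ e := by
        by_contra hx
        exact heB (Finset.mem_union_left _ (Finset.mem_filter.mpr ⟨heA, hx⟩))
      exact hctr x hx self_mem_cls
    have := compCount_split B M hBM x
    rwa [h0, Finset.union_empty] at this
  -- injection
  have hinj : ((compPartition B).filter (· ⊆ cls M x)).card
      ≤ ((compPartition A₀).filter (· ⊆ cls A x)).card := by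
    have key : ∀ C ∈ (compPartition B).filter (· ⊆ cls M x),
        ∃ y, y ∈ C ∧ cls A₀ y ⊆ cls A x := by
      intro C hC
      obtain ⟨hCP, hCU⟩ := Finset.mem_filter.mp hC
      rw [compPartition_eq] at hCP
      obtain ⟨v, -, rfl⟩ := Finset.mem_image.mp hCP
      by_cases hx : x ∈ cls B v
      · refine ⟨x, hx, ?_⟩
        intro u hu
        rw [mem_cls] at hu ⊢
        exact reach_mono (by rw [hA₀]; exact Finset.filter_subset _ _) hu
      · have hvx : v ≠ x := fun h => hx (h ▸ self_mem_cls)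
        have hvU : v ∈ cls M x := hCU self_mem_cls
        obtain ⟨y, hyx, hyxM, hr⟩ := walk_surgery (mem_cls.mp hvU) hvx
        have hMB : M.filter (fun e => x ∉ e) = B := by
          show (A ∪ F').filter (fun e => x ∉ e) = A.filter (fun e => x ∉ e) ∪ F'
          rw [Finset.filter_union, Finset.filter_true_of_mem hF'x]
        rw [hMB] at hr
        refine ⟨y, mem_cls.mpr hr.symm, ?_⟩
        have hyxA : s(y, x) ∈ A := by
          rcases Finset.mem_union.mp hyxM with h | h
          · exact h
          · exact absurd (Sym2.mem_mk_right y x) (hF'x _ h)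
        intro u hu
        rw [mem_cls] at hu ⊢
        refine (reach_mono (by rw [hA₀]; exact Finset.filter_subset _ _) hu).trans ?_
        exact SimpleGraph.Adj.reachable ((fromEdgeSet_adj _).mpr ⟨by exact_mod_cast hyxA, hyx⟩)
    classical
    refine Finset.card_le_card_of_injOn
      (fun C => cls A₀ (if h : ∃ y, y ∈ C ∧ cls A₀ y ⊆ cls A x then h.choose else x))
      ?_ ?_
    · intro C hC
      have hk := key C hC
      simp only [dif_pos hk]
      refine Finset.mem_filter.mpr ⟨cls_mem_compPartition _ _, hk.choose_spec.2⟩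
    · intro C₁ hC₁ C₂ hC₂ hf
      have hk₁ := key C₁ hC₁
      have hk₂ := key C₂ hC₂
      simp only [dif_pos hk₁, dif_pos hk₂] at hf
      have hy₁ := hk₁.choose_spec.1
      have hy₂ := hk₂.choose_spec.1
      have hrB : (fromEdgeSet (↑B : Set (Sym2 V))).Reachable hk₁.choose hk₂.choose :=
        reach_mono (by rw [hB]; exact Finset.subset_union_left) (reach_of_cls_eq hf)
      -- C₁ = cls B y₁, C₂ = cls B y₂
      obtain ⟨hCP₁, -⟩ := Finset.mem_filter.mp hC₁
      obtain ⟨hCP₂, -⟩ := Finset.mem_filter.mp hC₂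
      rw [compPartition_eq] at hCP₁ hCP₂
      obtain ⟨v₁, -, rfl⟩ := Finset.mem_image.mp hCP₁
      obtain ⟨v₂, -, rfl⟩ := Finset.mem_image.mp hCP₂
      rw [← cls_eq_of_mem hy₁, ← cls_eq_of_mem hy₂]
      exact cls_eq_of_reach hrB
  omega


lemma partition_class_eq {X : Finset (Sym2 V)} {c : Finset V} {a : V}
    (hc : c ∈ compPartition X) (ha : a ∈ c) : c = cls X a := by
  rw [compPartition_eq] at hc
  obtain ⟨v, -, rfl⟩ := Finset.mem_image.mp hc
  exact (cls_eq_of_mem ha).symm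

/-- more edges means fewer components -/
lemma compCount_anti {X Y : Finset (Sym2 V)} (h : X ⊆ Y) :
    compCount Y ≤ compCount X := by
  set HX := fromEdgeSet (↑X : Set (Sym2 V))
  set HY := fromEdgeSet (↑Y : Set (Sym2 V))
  have hwd : ∀ (v w : V) (p : HX.Walk v w), p.IsPath →
      HY.connectedComponentMk v = HY.connectedComponentMk w := by
    intro v w p _
    exact ConnectedComponent.sound (reach_mono h ⟨p⟩)
  have hsurj : Function.Surjective (ConnectedComponent.lift _ hwd :
      HX.ConnectedComponent → HY.ConnectedComponent) := by
    intro c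
    refine ConnectedComponent.ind (fun v => ⟨HX.connectedComponentMk v, rfl⟩) c
  exact Nat.card_le_card_of_surjective _ hsurj

/-- adding an edge whose endpoints are already connected (or equal) keeps classes. -/
lemma cls_insert_eq {X : Finset (Sym2 V)} {a b : V}
    (hab : a = b ∨ (fromEdgeSet (↑X : Set (Sym2 V))).Reachable a b) (v : V) :
    cls (insert s(a, b) X) v = cls X v := by
  apply Finset.Subset.antisymm
  · intro u hu
    rw [mem_cls] at hu ⊢
    refine reach_of_adj_reach ?_ hu
    intro c d hcd
    have h1 := (fromEdgeSet_adj _).mp hcd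
    have h2 : s(c, d) ∈ insert s(a, b) X := by exact_mod_cast h1.1
    rcases Finset.mem_insert.mp h2 with heq | hmem
    · rcases Sym2.eq_iff.mp heq with ⟨rfl, rfl⟩ | ⟨rfl, rfl⟩
      · rcases hab with h | hr
        · exact absurd h h1.2
        · exact hr
      · rcases hab with h | hr
        · exact absurd h.symm h1.2
        · exact hr.symm
    · exact SimpleGraph.Adj.reachable ((fromEdgeSet_adj _).mpr ⟨by exact_mod_cast hmem, h1.2⟩)
  · exact cls_mono (Finset.subset_insert _ _)

lemma compCount_insert_eq {X : Finset (Sym2 V)} {a b : V}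
    (hab : a = b ∨ (fromEdgeSet (↑X : Set (Sym2 V))).Reachable a b) :
    compCount (insert s(a, b) X) = compCount X := by
  rw [compCount_eq_card, compCount_eq_card, compPartition_eq, compPartition_eq]
  congr 1
  exact Finset.image_congr (fun v _ => cls_insert_eq hab v)

/-- if neither endpoint is in the class of `v`, the class is unchanged. -/
lemma cls_insert_eq_of_not_mem {X : Finset (Sym2 V)} {a b v : V}
    (ha : a ∉ cls X v) (hb : b ∉ cls X v) :
    cls (insert s(a, b) X) v = cls X v := by
  apply Finset.Subset.antisymm
  · intro u hu
    have hr := (mem_cls.mp hu).symm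
    have key := reach_closed (H := fromEdgeSet (↑(insert s(a, b) X) : Set (Sym2 V)))
      (H' := fromEdgeSet (↑X : Set (Sym2 V))) (P := fun z => z ∈ cls X v)
      (fun c d hcd hc => by
        have h1 := (fromEdgeSet_adj _).mp hcd
        have h2 : s(c, d) ∈ insert s(a, b) X := by exact_mod_cast h1.1
        have hcde : s(c, d) ∈ X := by
          rcases Finset.mem_insert.mp h2 with heq | hmem
          · exfalso
            rcases Sym2.eq_iff.mp heq with ⟨rfl, rfl⟩ | ⟨rfl, rfl⟩
            · exact ha hc
            · exact hb hc
          · exact hmem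
        have hadjX : (fromEdgeSet (↑X : Set (Sym2 V))).Adj c d :=
          (fromEdgeSet_adj _).mpr ⟨by exact_mod_cast hcde, h1.2⟩
        refine ⟨?_, hadjX⟩
        simp only [mem_cls] at hc ⊢
        exact hadjX.symm.reachable.trans hc)
      hr self_mem_cls
    exact mem_cls.mpr key.2.symm
  · exact cls_mono (Finset.subset_insert _ _)

/-- DROP1 : adding one edge decreases the component count by at most one. -/
lemma compCount_le_insert_add_one (X : Finset (Sym2 V)) (e : Sym2 V) :
    compCount X ≤ compCount (insert e X) + 1 := by
  induction e using Sym2.ind with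
  | _ a b =>
    have h1 : compPartition X ⊆
        (compPartition X).filter (fun c => a ∉ c ∧ b ∉ c) ∪ {cls X a, cls X b} := by
      intro c hc
      by_cases hac : a ∈ c
      · rw [partition_class_eq hc hac]
        exact Finset.mem_union_right _ (Finset.mem_insert_self _ _)
      by_cases hbc : b ∈ c
      · rw [partition_class_eq hc hbc]
        exact Finset.mem_union_right _ (by simp)
      · exact Finset.mem_union_left _ (Finset.mem_filter.mpr ⟨hc, hac, hbc⟩)
    have hcard1 : (compPartition X).card ≤
        ((compPartition X).filter (fun c => a ∉ c ∧ b ∉ c)).card + 2 := by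
      calc (compPartition X).card
          ≤ ((compPartition X).filter (fun c => a ∉ c ∧ b ∉ c) ∪ {cls X a, cls X b}).card :=
            Finset.card_le_card h1
        _ ≤ ((compPartition X).filter (fun c => a ∉ c ∧ b ∉ c)).card
              + ({cls X a, cls X b} : Finset (Finset V)).card := Finset.card_union_le _ _
        _ ≤ _ + 2 := by
            have h2 := Finset.card_insert_le (cls X a) ({cls X b} : Finset (Finset V))
            simp only [Finset.card_singleton] at h2
            omega
    have h3 : insert (cls (insert s(a, b) X) a)
        ((compPartition X).filter (fun c => a ∉ c ∧ b ∉ c))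
          ⊆ compPartition (insert s(a, b) X) := by
      intro c hc
      rcases Finset.mem_insert.mp hc with rfl | hc
      · exact cls_mem_compPartition _ _
      · obtain ⟨hcP, hac, hbc⟩ := Finset.mem_filter.mp hc
        rw [compPartition_eq] at hcP
        obtain ⟨v, -, rfl⟩ := Finset.mem_image.mp hcP
        rw [← cls_insert_eq_of_not_mem hac hbc]
        exact cls_mem_compPartition _ _
    have h4 : cls (insert s(a, b) X) a ∉
        (compPartition X).filter (fun c => a ∉ c ∧ b ∉ c) := by
      intro hmem
      exact (Finset.mem_filter.mp hmem).2.1 self_mem_cls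
    have hcard2 : ((compPartition X).filter (fun c => a ∉ c ∧ b ∉ c)).card + 1
        ≤ (compPartition (insert s(a, b) X)).card := by
      have h5 := Finset.card_le_card h3
      rwa [Finset.card_insert_of_notMem h4] at h5
    rw [compCount_eq_card, compCount_eq_card]
    omega

/-- MERGEDROP : adding an edge between two distinct components drops the count. -/
lemma compCount_insert_add_one_le {X : Finset (Sym2 V)} {a b : V} (hne : a ≠ b)
    (hnr : ¬ (fromEdgeSet (↑X : Set (Sym2 V))).Reachable a b) :
    compCount (insert s(a, b) X) + 1 ≤ compCount X := by
  have hreachY : (fromEdgeSet (↑(insert s(a, b) X) : Set (Sym2 V))).Reachable a b :=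
    SimpleGraph.Adj.reachable
      ((fromEdgeSet_adj _).mpr ⟨by exact_mod_cast Finset.mem_insert_self _ _, hne⟩)
  have h1 : compPartition (insert s(a, b) X) ⊆
      (compPartition X).filter (fun c => a ∉ c ∧ b ∉ c)
        ∪ {cls (insert s(a, b) X) a} := by
    intro c hc
    rw [compPartition_eq] at hc
    obtain ⟨v, -, rfl⟩ := Finset.mem_image.mp hc
    by_cases hav : a ∈ cls (insert s(a, b) X) v
    · rw [cls_eq_of_mem hav]
      exact Finset.mem_union_right _ (Finset.mem_singleton_self _)
    · have hbv : b ∉ cls (insert s(a, b) X) v := by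
        intro hbv
        exact hav (mem_cls.mpr (hreachY.trans (mem_cls.mp hbv)))
      have haX : a ∉ cls X v := fun h => hav (cls_mono (Finset.subset_insert _ _) h)
      have hbX : b ∉ cls X v := fun h => hbv (cls_mono (Finset.subset_insert _ _) h)
      rw [cls_insert_eq_of_not_mem haX hbX]
      exact Finset.mem_union_left _
        (Finset.mem_filter.mpr ⟨cls_mem_compPartition _ _, haX, hbX⟩)
  have hpair : ({cls X a, cls X b} : Finset (Finset V)) ⊆ compPartition X := by
    intro c hc
    rcases Finset.mem_insert.mp hc with rfl | hc
    · exact cls_mem_compPartition _ _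
    · rw [Finset.mem_singleton.mp hc]
      exact cls_mem_compPartition _ _
  have hab : cls X a ≠ cls X b := fun h => hnr (reach_of_cls_eq h)
  have hpair2 : ({cls X a, cls X b} : Finset (Finset V)).card = 2 :=
    Finset.card_pair hab
  have h2 : (compPartition X).filter (fun c => a ∉ c ∧ b ∉ c)
      ⊆ compPartition X \ {cls X a, cls X b} := by
    intro c hc
    obtain ⟨hcP, hac, hbc⟩ := Finset.mem_filter.mp hc
    refine Finset.mem_sdiff.mpr ⟨hcP, ?_⟩
    intro hmem
    rcases Finset.mem_insert.mp hmem with rfl | hmem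
    · exact hac self_mem_cls
    · rw [Finset.mem_singleton.mp hmem] at hbc
      exact hbc self_mem_cls
  have hcard2 : (compPartition X \ {cls X a, cls X b}).card + 2 = (compPartition X).card := by
    rw [Finset.card_sdiff_of_subset hpair, hpair2]
    have := Finset.card_le_card hpair
    omega
  have hcard1 : (compPartition (insert s(a, b) X)).card ≤
      ((compPartition X).filter (fun c => a ∉ c ∧ b ∉ c)).card + 1 := by
    calc (compPartition (insert s(a, b) X)).card
        ≤ _ := Finset.card_le_card h1
      _ ≤ ((compPartition X).filter (fun c => a ∉ c ∧ b ∉ c)).card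
            + ({cls (insert s(a, b) X) a} : Finset (Finset V)).card := Finset.card_union_le _ _
      _ = _ + 1 := by rw [Finset.card_singleton]
  have hcard3 := Finset.card_le_card h2
  rw [compCount_eq_card, compCount_eq_card]
  omega

lemma compCount_supermod_edge {X Y : Finset (Sym2 V)} (hXY : X ⊆ Y) (e : Sym2 V) :
    compCount (insert e X) + compCount Y ≤ compCount (insert e Y) + compCount X := by
  induction e using Sym2.ind with
  | _ a b =>
    by_cases hab : a = b ∨ (fromEdgeSet (↑X : Set (Sym2 V))).Reachable a b
    · rw [compCount_insert_eq hab,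
        compCount_insert_eq (hab.imp id (fun h => reach_mono hXY h))]
      omega
    · push_neg at hab
      have h1 := compCount_insert_add_one_le hab.1 hab.2
      have h2 := compCount_le_insert_add_one Y s(a, b)
      omega

/-- supermodularity of the component count. -/
lemma compCount_supermod (D X Y : Finset (Sym2 V)) (hXY : X ⊆ Y) :
    compCount (X ∪ D) + compCount Y ≤ compCount (Y ∪ D) + compCount X := by
  induction D using Finset.induction_on with
  | empty =>
    rw [Finset.union_empty, Finset.union_empty]
    omega
  | @insert e D he ih =>
    rw [Finset.union_insert, Finset.union_insert]
    have h1 := compCount_supermod_edge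
      (Finset.union_subset_union hXY (Finset.Subset.refl D)) e
    omega



end PottsAux


/-- Main extension theorem: let `G = (V, E)` have nonnegative edge weights, `x ∈ V`,
and let `F'` be a set of edges of `G - x` maximizing `f_{G-x}`.  Let `P_G(F')` be the
partition of `V` consisting of the vertex sets of the connected components of
`(V \ {x}, F')` together with `{x}`.  Then for any `𝒲 ⊆ P_G(F')` containing `{x}`
minimizing `|𝒲| - 1 - w(E(𝒲))` over subsets of `P_G(F')` containing `{x}`, the edge
set `F* = F' ∪ E(𝒲)` maximizes `f_G` over all subsets of `E`. -/
theorem optimal_extension_step (G : SimpleGraph V) [DecidableRel G.Adj]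
    (w : Sym2 V → ℝ) (hw : ∀ e, 0 ≤ w e) (x : V)
    (F' : Finset (Sym2 V)) (hF' : F' ⊆ G.edgeFinset.filter (fun e => x ∉ e))
    (hopt : ∀ A ⊆ G.edgeFinset.filter (fun e => x ∉ e),
      pottsFunOn {v : V | v ≠ x} w A ≤ pottsFunOn {v : V | v ≠ x} w F')
    (𝒲 : Finset (Finset V)) (h𝒲 : 𝒲 ⊆ compPartition F')
    (hx𝒲 : ({x} : Finset V) ∈ 𝒲)
    (hmin : ∀ 𝒲' ⊆ compPartition F', ({x} : Finset V) ∈ 𝒲' →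
      (𝒲.card : ℝ) - 1 - ∑ e ∈ crossEdges G 𝒲, w e ≤
        (𝒲'.card : ℝ) - 1 - ∑ e ∈ crossEdges G 𝒲', w e) :
    F' ∪ crossEdges G 𝒲 ⊆ G.edgeFinset ∧
    ∀ A ⊆ G.edgeFinset, pottsFun w A ≤ pottsFun w (F' ∪ crossEdges G 𝒲) := by
  classical
  have hF'x : ∀ e ∈ F', x ∉ e := fun e he => (Finset.mem_filter.mp (hF' he)).2
  have hF'E : F' ⊆ G.edgeFinset := fun e he => (Finset.mem_filter.mp (hF' he)).1
  refine ⟨Finset.union_subset hF'E (Finset.filter_subset _ _), ?_⟩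
  have hG_edge : ∀ {e : Sym2 V}, e ∈ G.edgeFinset → ∃ i j : V, e = s(i, j) ∧ G.Adj i j := by
    intro e he
    induction e using Sym2.ind with
    | _ i j =>
      exact ⟨i, j, rfl, by rwa [SimpleGraph.mem_edgeFinset, SimpleGraph.mem_edgeSet] at he⟩
  have hopt' : ∀ X, X ⊆ G.edgeFinset.filter (fun e => x ∉ e) →
      (compCount X : ℝ) + ∑ e ∈ X, w e ≤ (compCount F' : ℝ) + ∑ e ∈ F', w e := by
    intro X hX
    have h1 := hopt X hX
    rw [pottsFunOn, pottsFunOn] at h1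
    have e1 : compCount X = compCountOn {v : V | v ≠ x} X + 1 :=
      PottsAux.compCount_eq_on_add_one (fun e he => (Finset.mem_filter.mp (hX he)).2)
    have e2 : compCount F' = compCountOn {v : V | v ≠ x} F' + 1 :=
      PottsAux.compCount_eq_on_add_one hF'x
    rw [e1, e2]
    push_cast
    linarith
  have hzero : ∀ a b : V, s(a, b) ∈ G.edgeFinset → x ∉ (s(a, b) : Sym2 V) →
      s(a, b) ∉ F' → (SimpleGraph.fromEdgeSet (↑F' : Set (Sym2 V))).Reachable a b → w s(a, b) = 0 := by
    intro a b hab hxab hnF hr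
    have hsub : insert s(a, b) F' ⊆ G.edgeFinset.filter (fun e => x ∉ e) := by
      intro e he
      rcases Finset.mem_insert.mp he with rfl | he
      · exact Finset.mem_filter.mpr ⟨hab, hxab⟩
      · exact hF' he
    have hcc : compCount (insert s(a, b) F') = compCount F' := by
      rw [PottsAux.compCount_eq_card, PottsAux.compCount_eq_card,
        PottsAux.compPartition_eq, PottsAux.compPartition_eq]
      congr 1
      apply Finset.image_congr
      intro v _
      apply Finset.Subset.antisymm
      · intro u hu
        rw [PottsAux.mem_cls] at hu ⊢
        refine PottsAux.reach_of_adj_reach ?_ hu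
        intro c d hcd
        have h1 := (SimpleGraph.fromEdgeSet_adj _).mp hcd
        have h2 : s(c, d) ∈ insert s(a, b) F' := by exact_mod_cast h1.1
        rcases Finset.mem_insert.mp h2 with heq | hmem
        · rcases Sym2.eq_iff.mp heq with ⟨rfl, rfl⟩ | ⟨rfl, rfl⟩
          · exact hr
          · exact hr.symm
        · exact SimpleGraph.Adj.reachable
            ((SimpleGraph.fromEdgeSet_adj _).mpr ⟨by exact_mod_cast hmem, h1.2⟩)
      · exact PottsAux.cls_mono (Finset.subset_insert _ _)
    have h2 := hopt' _ hsub
    rw [Finset.sum_insert hnF, hcc] at h2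
    have h3 := hw s(a, b)
    linarith
  have hxcls : PottsAux.cls F' x = {x} := by
    ext u
    simp only [PottsAux.mem_cls, Finset.mem_singleton]
    constructor
    · intro h
      exact PottsAux.eq_of_reach_isolated hF'x h.symm
    · rintro rfl
      exact SimpleGraph.Reachable.refl _
  intro A hA
  rw [pottsFun, pottsFun]
  have hAM : A ⊆ (A ∪ F') := Finset.subset_union_left
  have hF'M : F' ⊆ (A ∪ F') := Finset.subset_union_right
  have hD0A : ((A.filter (fun e => x ∉ e)).filter (fun e => e ∉ F')) ⊆ A := (Finset.filter_subset _ _).trans (Finset.filter_subset _ _)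
  have hD0mem : ∀ e ∈ ((A.filter (fun e => x ∉ e)).filter (fun e => e ∉ F')), e ∈ A ∧ x ∉ e ∧ e ∉ F' := by
    intro e he
    have h1 := Finset.mem_filter.mp he
    have h2 := Finset.mem_filter.mp h1.1
    exact ⟨h2.1, h2.2, h1.2⟩
  have hxU : x ∈ (PottsAux.cls (A ∪ F') x) := PottsAux.self_mem_cls
  have hDAin : ∀ e ∈ (((A.filter (fun e => x ∉ e)).filter (fun e => e ∉ F')).filter (fun e => ¬ ∀ v ∈ e, v ∉ (PottsAux.cls (A ∪ F') x))), ∀ v ∈ e, v ∈ (PottsAux.cls (A ∪ F') x) := by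
    intro e he
    have h1 := Finset.mem_filter.mp he
    have h2 := hD0mem e h1.1
    obtain ⟨i, j, rfl, hadj⟩ := hG_edge (hA h2.1)
    have hadjM : (SimpleGraph.fromEdgeSet (↑(A ∪ F') : Set (Sym2 V))).Adj i j :=
      (SimpleGraph.fromEdgeSet_adj _).mpr
        ⟨by exact_mod_cast Finset.mem_union_left _ h2.1, hadj.ne⟩
    have h3 := h1.2
    push_neg at h3
    obtain ⟨v₀, hv₀e, hv₀U⟩ := h3
    have hij : i ∈ (PottsAux.cls (A ∪ F') x) ∧ j ∈ (PottsAux.cls (A ∪ F') x) := by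
      rcases Sym2.mem_iff.mp hv₀e with rfl | rfl
      · exact ⟨hv₀U, PottsAux.cls_adj_closed hadjM hv₀U⟩
      · exact ⟨PottsAux.cls_adj_closed hadjM.symm hv₀U, hv₀U⟩
    intro v hv
    rcases Sym2.mem_iff.mp hv with rfl | rfl
    · exact hij.1
    · exact hij.2
  have E1 : compCount (F' ∪ (((A.filter (fun e => x ∉ e)).filter (fun e => e ∉ F')).filter (fun e => ∀ v ∈ e, v ∉ (PottsAux.cls (A ∪ F') x)))) + 1 = ((compPartition F').filter (· ⊆ (PottsAux.cls (A ∪ F') x))).card + compCount (A ∪ F') := by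
    have hDoutEq : ((A ∪ F') \ F').filter (fun e => ∀ v ∈ e, v ∉ PottsAux.cls (A ∪ F') x) = (((A.filter (fun e => x ∉ e)).filter (fun e => e ∉ F')).filter (fun e => ∀ v ∈ e, v ∉ (PottsAux.cls (A ∪ F') x))) := by
      ext e
      simp only [Finset.mem_filter, Finset.mem_sdiff, Finset.mem_union]
      constructor
      · rintro ⟨⟨hAe, hnF⟩, hout⟩
        have heA : e ∈ A := by
          rcases hAe with h | h
          · exact h
          · exact absurd h hnF
        have hxe : x ∉ e := fun hx => hout x hx hxU
        exact ⟨⟨⟨heA, hxe⟩, hnF⟩, hout⟩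
      · rintro ⟨⟨⟨heA, hxe⟩, hnF⟩, hout⟩
        exact ⟨⟨Or.inl heA, hnF⟩, hout⟩
    have h := PottsAux.compCount_split F' (A ∪ F') hF'M x
    rwa [hDoutEq] at h
  have E4 : compCount A + compCount ((A.filter (fun e => x ∉ e)) ∪ F') ≤ compCount (A ∪ F') + compCount (A.filter (fun e => x ∉ e)) :=
    PottsAux.compCount_ls x hF'x
  have hAFsub : ((A.filter (fun e => x ∉ e)).filter (fun e => ¬ e ∉ F')) ⊆ F' := by
    intro e he
    exact not_not.mp (Finset.mem_filter.mp he).2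
  have E14 : (compCount ((A.filter (fun e => x ∉ e)).filter (fun e => ¬ e ∉ F')) : ℝ) + ∑ e ∈ ((A.filter (fun e => x ∉ e)).filter (fun e => ¬ e ∉ F')), w e
      ≤ (compCount F' : ℝ) + ∑ e ∈ F', w e :=
    hopt' _ (fun e he => hF' (hAFsub he))
  have E15 : compCount F' + compCount (A.filter (fun e => x ∉ e))
      ≤ compCount ((A.filter (fun e => x ∉ e)) ∪ F') + compCount ((A.filter (fun e => x ∉ e)).filter (fun e => ¬ e ∉ F')) := by
    have h := PottsAux.compCount_supermod F' ((A.filter (fun e => x ∉ e)).filter (fun e => ¬ e ∉ F')) (A.filter (fun e => x ∉ e)) (Finset.filter_subset _ _)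
    rwa [Finset.union_eq_right.mpr hAFsub] at h
  have hFDOE : F' ∪ (((A.filter (fun e => x ∉ e)).filter (fun e => e ∉ F')).filter (fun e => ∀ v ∈ e, v ∉ (PottsAux.cls (A ∪ F') x))) ⊆ G.edgeFinset.filter (fun e => x ∉ e) := by
    intro e he
    rcases Finset.mem_union.mp he with he | he
    · exact hF' he
    · have h2 := hD0mem e (Finset.filter_subset _ _ he)
      exact Finset.mem_filter.mpr ⟨hA h2.1, h2.2.1⟩
  have hdisjFDO : Disjoint F' (((A.filter (fun e => x ∉ e)).filter (fun e => e ∉ F')).filter (fun e => ∀ v ∈ e, v ∉ (PottsAux.cls (A ∪ F') x))) := by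
    rw [Finset.disjoint_left]
    intro e he1 he2
    exact (hD0mem e (Finset.filter_subset _ _ he2)).2.2 he1
  have Eha : (compCount (F' ∪ (((A.filter (fun e => x ∉ e)).filter (fun e => e ∉ F')).filter (fun e => ∀ v ∈ e, v ∉ (PottsAux.cls (A ∪ F') x)))) : ℝ) + ∑ e ∈ (((A.filter (fun e => x ∉ e)).filter (fun e => e ∉ F')).filter (fun e => ∀ v ∈ e, v ∉ (PottsAux.cls (A ∪ F') x))), w e ≤ (compCount F' : ℝ) := by
    have h := hopt' _ hFDOE
    rw [Finset.sum_union hdisjFDO] at h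
    linarith
  have E6b : ∑ e ∈ ((A.filter (fun e => x ∉ e)).filter (fun e => e ∉ F')), w e + ∑ e ∈ ((A.filter (fun e => x ∉ e)).filter (fun e => ¬ e ∉ F')), w e = ∑ e ∈ (A.filter (fun e => x ∉ e)), w e :=
    Finset.sum_filter_add_sum_filter_not _ _ _
  have E6c : ∑ e ∈ (((A.filter (fun e => x ∉ e)).filter (fun e => e ∉ F')).filter (fun e => ∀ v ∈ e, v ∉ (PottsAux.cls (A ∪ F') x))), w e + ∑ e ∈ (((A.filter (fun e => x ∉ e)).filter (fun e => e ∉ F')).filter (fun e => ¬ ∀ v ∈ e, v ∉ (PottsAux.cls (A ∪ F') x))), w e = ∑ e ∈ ((A.filter (fun e => x ∉ e)).filter (fun e => e ∉ F')), w e :=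
    Finset.sum_filter_add_sum_filter_not _ _ _
  have E6d : ∑ e ∈ ((((A.filter (fun e => x ∉ e)).filter (fun e => e ∉ F')).filter (fun e => ¬ ∀ v ∈ e, v ∉ (PottsAux.cls (A ∪ F') x))).filter (fun e => ∀ i j : V, e = s(i, j) → (SimpleGraph.fromEdgeSet (↑F' : Set (Sym2 V))).Reachable i j)), w e + ∑ e ∈ ((((A.filter (fun e => x ∉ e)).filter (fun e => e ∉ F')).filter (fun e => ¬ ∀ v ∈ e, v ∉ (PottsAux.cls (A ∪ F') x))).filter (fun e => ¬ (∀ i j : V, e = s(i, j) → (SimpleGraph.fromEdgeSet (↑F' : Set (Sym2 V))).Reachable i j))), w e = ∑ e ∈ (((A.filter (fun e => x ∉ e)).filter (fun e => e ∉ F')).filter (fun e => ¬ ∀ v ∈ e, v ∉ (PottsAux.cls (A ∪ F') x))), w e :=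
    Finset.sum_filter_add_sum_filter_not _ _ _
  have E6e : ∑ e ∈ ((((A.filter (fun e => x ∉ e)).filter (fun e => e ∉ F')).filter (fun e => ¬ ∀ v ∈ e, v ∉ (PottsAux.cls (A ∪ F') x))).filter (fun e => ∀ i j : V, e = s(i, j) → (SimpleGraph.fromEdgeSet (↑F' : Set (Sym2 V))).Reachable i j)), w e = 0 := by
    refine Finset.sum_eq_zero ?_
    intro e he
    have h1 := Finset.mem_filter.mp he
    have h2 := hD0mem e (Finset.filter_subset _ _ h1.1)
    obtain ⟨i, j, rfl, hadj⟩ := hG_edge (hA h2.1)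
    exact hzero i j (hA h2.1) h2.2.1 h2.2.2 (h1.2 i j rfl)
  have hKmem : ∀ a b : V, s(a, b) ∈ crossEdges G 𝒲 → ∃ Z ∈ 𝒲, a ∈ Z := by
    intro a b hab
    obtain ⟨-, X, hX, Y, hY, hne, i, j, hij, hi, hj⟩ := Finset.mem_filter.mp hab
    rcases Sym2.eq_iff.mp hij with ⟨rfl, rfl⟩ | ⟨rfl, rfl⟩
    · exact ⟨X, hX, hi⟩
    · exact ⟨Y, hY, hj⟩
  have E8 : compCount F' + 1 ≤ compCount (F' ∪ crossEdges G 𝒲) + 𝒲.card :=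
    PottsAux.compCount_union_cross_ge h𝒲 hx𝒲 hxcls hKmem
  have hxWP : ({x} : Finset V) ∈ ((compPartition F').filter (· ⊆ (PottsAux.cls (A ∪ F') x))) := by
    refine Finset.mem_filter.mpr ⟨?_, ?_⟩
    · exact hxcls ▸ PottsAux.cls_mem_compPartition F' x
    · exact Finset.singleton_subset_iff.mpr hxU
  have E9 := hmin ((compPartition F').filter (· ⊆ (PottsAux.cls (A ∪ F') x))) (Finset.filter_subset _ _) hxWP
  have hUsubcls : ∀ u ∈ (PottsAux.cls (A ∪ F') x), PottsAux.cls F' u ⊆ (PottsAux.cls (A ∪ F') x) :=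
    fun u hu => PottsAux.cls_subset_clsM hF'M hu
  have hAxCross : (A.filter (fun e => ¬ x ∉ e)) ⊆ crossEdges G ((compPartition F').filter (· ⊆ (PottsAux.cls (A ∪ F') x))) := by
    intro e he
    have h1 := Finset.mem_filter.mp he
    have hxe : x ∈ e := not_not.mp h1.2
    obtain ⟨u, rfl⟩ := Sym2.mem_iff_exists.mp hxe
    have heG : s(x, u) ∈ G.edgeFinset := hA h1.1
    have hGadj : G.Adj x u := by
      rwa [SimpleGraph.mem_edgeFinset, SimpleGraph.mem_edgeSet] at heG
    have hux : u ≠ x := hGadj.ne'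
    have huU : u ∈ (PottsAux.cls (A ∪ F') x) := by
      rw [PottsAux.mem_cls]
      exact SimpleGraph.Adj.reachable
        (((SimpleGraph.fromEdgeSet_adj _).mpr
          ⟨by exact_mod_cast Finset.mem_union_left _ h1.1, hGadj.ne⟩).symm)
    have hclsuU : PottsAux.cls F' u ∈ ((compPartition F').filter (· ⊆ (PottsAux.cls (A ∪ F') x))) := Finset.mem_filter.mpr
      ⟨PottsAux.cls_mem_compPartition F' u, hUsubcls u huU⟩
    refine Finset.mem_filter.mpr ⟨heG, {x}, hxWP, PottsAux.cls F' u, hclsuU, ?_,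
      x, u, rfl, Finset.mem_singleton_self x, PottsAux.self_mem_cls⟩
    intro hEq
    have hu : u ∈ ({x} : Finset V) := hEq ▸ PottsAux.self_mem_cls
    exact hux (Finset.mem_singleton.mp hu)
  have hDUCross : ((((A.filter (fun e => x ∉ e)).filter (fun e => e ∉ F')).filter (fun e => ¬ ∀ v ∈ e, v ∉ (PottsAux.cls (A ∪ F') x))).filter (fun e => ¬ (∀ i j : V, e = s(i, j) → (SimpleGraph.fromEdgeSet (↑F' : Set (Sym2 V))).Reachable i j))) ⊆ crossEdges G ((compPartition F').filter (· ⊆ (PottsAux.cls (A ∪ F') x))) := by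
    intro e he
    have h1 := Finset.mem_filter.mp he
    have hin := hDAin e h1.1
    have h2 := hD0mem e (Finset.filter_subset _ _ h1.1)
    have heG : e ∈ G.edgeFinset := hA h2.1
    have h3 := h1.2
    push_neg at h3
    obtain ⟨i, j, hij, hnr⟩ := h3
    have hie : i ∈ e := by rw [hij]; exact Sym2.mem_mk_left i j
    have hje : j ∈ e := by rw [hij]; exact Sym2.mem_mk_right i j
    have hiU := hin i hie
    have hjU := hin j hje
    refine Finset.mem_filter.mpr ⟨heG, PottsAux.cls F' i, ?_, PottsAux.cls F' j, ?_, ?_,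
      i, j, hij, PottsAux.self_mem_cls, PottsAux.self_mem_cls⟩
    · exact Finset.mem_filter.mpr ⟨PottsAux.cls_mem_compPartition F' i, hUsubcls i hiU⟩
    · exact Finset.mem_filter.mpr ⟨PottsAux.cls_mem_compPartition F' j, hUsubcls j hjU⟩
    · intro hEq
      exact hnr (PottsAux.reach_of_cls_eq hEq)
  have hdisjAxDU : Disjoint (A.filter (fun e => ¬ x ∉ e)) ((((A.filter (fun e => x ∉ e)).filter (fun e => e ∉ F')).filter (fun e => ¬ ∀ v ∈ e, v ∉ (PottsAux.cls (A ∪ F') x))).filter (fun e => ¬ (∀ i j : V, e = s(i, j) → (SimpleGraph.fromEdgeSet (↑F' : Set (Sym2 V))).Reachable i j))) := by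
    rw [Finset.disjoint_left]
    intro e he1 he2
    have h2 := hD0mem e (Finset.filter_subset _ _ ((Finset.filter_subset _ _) he2))
    exact (Finset.mem_filter.mp he1).2 h2.2.1
  have E10 : ∑ e ∈ (A.filter (fun e => ¬ x ∉ e)), w e + ∑ e ∈ ((((A.filter (fun e => x ∉ e)).filter (fun e => e ∉ F')).filter (fun e => ¬ ∀ v ∈ e, v ∉ (PottsAux.cls (A ∪ F') x))).filter (fun e => ¬ (∀ i j : V, e = s(i, j) → (SimpleGraph.fromEdgeSet (↑F' : Set (Sym2 V))).Reachable i j))), w e ≤ ∑ e ∈ crossEdges G ((compPartition F').filter (· ⊆ (PottsAux.cls (A ∪ F') x))), w e := by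
    rw [← Finset.sum_union hdisjAxDU]
    exact Finset.sum_le_sum_of_subset_of_nonneg
      (Finset.union_subset hAxCross hDUCross) (fun e _ _ => hw e)
  have E11 : ∑ e ∈ (A.filter (fun e => x ∉ e)), w e + ∑ e ∈ (A.filter (fun e => ¬ x ∉ e)), w e = ∑ e ∈ A, w e :=
    Finset.sum_filter_add_sum_filter_not _ _ _
  have hdisjF'K : Disjoint F' (crossEdges G 𝒲) := by
    rw [Finset.disjoint_left]
    intro e he1 he2
    obtain ⟨-, X, hX, Y, hY, hne, i, j, hij, hi, hj⟩ := Finset.mem_filter.mp he2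
    have heF : s(i, j) ∈ F' := by rwa [hij] at he1
    have hadj : G.Adj i j := by
      have h4 := hF'E heF
      rwa [SimpleGraph.mem_edgeFinset, SimpleGraph.mem_edgeSet] at h4
    have hr : (SimpleGraph.fromEdgeSet (↑F' : Set (Sym2 V))).Reachable i j :=
      SimpleGraph.Adj.reachable
        ((SimpleGraph.fromEdgeSet_adj _).mpr ⟨by exact_mod_cast heF, hadj.ne⟩)
    have hXi : X = PottsAux.cls F' i := PottsAux.partition_class_eq (h𝒲 hX) hi
    have hYj : Y = PottsAux.cls F' j := PottsAux.partition_class_eq (h𝒲 hY) hj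
    exact hne (by rw [hXi, hYj, PottsAux.cls_eq_of_reach hr])
  have E12 : ∑ e ∈ F' ∪ crossEdges G 𝒲, w e
      = ∑ e ∈ F', w e + ∑ e ∈ crossEdges G 𝒲, w e := Finset.sum_union hdisjF'K
  have E1' : (compCount (F' ∪ (((A.filter (fun e => x ∉ e)).filter (fun e => e ∉ F')).filter (fun e => ∀ v ∈ e, v ∉ (PottsAux.cls (A ∪ F') x)))) : ℝ) + 1 = (((compPartition F').filter (· ⊆ (PottsAux.cls (A ∪ F') x))).card : ℝ) + (compCount (A ∪ F') : ℝ) := by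
    exact_mod_cast E1
  have E4' : (compCount A : ℝ) + (compCount ((A.filter (fun e => x ∉ e)) ∪ F') : ℝ)
      ≤ (compCount (A ∪ F') : ℝ) + (compCount (A.filter (fun e => x ∉ e)) : ℝ) := by exact_mod_cast E4
  have E8' : (compCount F' : ℝ) + 1
      ≤ (compCount (F' ∪ crossEdges G 𝒲) : ℝ) + (𝒲.card : ℝ) := by exact_mod_cast E8
  have E15' : (compCount F' : ℝ) + (compCount (A.filter (fun e => x ∉ e)) : ℝ)
      ≤ (compCount ((A.filter (fun e => x ∉ e)) ∪ F') : ℝ) + (compCount ((A.filter (fun e => x ∉ e)).filter (fun e => ¬ e ∉ F')) : ℝ) := by exact_mod_cast E15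
  rw [E12]
  linarith [E1', E4', E15', E14, Eha, E9, E10, E11, E6b, E6c, E6d, E6e, E8']
end
end
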